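/- arXiv:math/0611097 — 11 statements merged into one kernel-verified Lean document; each statement's English description precedes it below -/
import Mathlib

section
/- Every generalized isometry between Hilbert C*-modules is φ-linear: if u : E → F satisfies ⟨ux, uy⟩ = φ(⟨x, y⟩) for all x, y ∈ E, where E is a Hilbert B-module, F a Hilbert C-module, and φ : B → C a C*-homomorphism, then u(x + y·b) = u(x) + u(y)·φ(b) for all x, y ∈ E and b ∈ B. -/
open scoped RightActions

/-- The Hilbert C⋆-module class as Mathlib defined it in December 2024 (right `A`-module,
`inner x (y <• a) = inner x y * a`); Mathlib's `CStarModule` is now a left-module class. -/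
class CStarModuleOld (A E : Type*) [NonUnitalSemiring A] [StarRing A]
    [Module ℂ A] [AddCommGroup E] [Module ℂ E] [PartialOrder A] [SMul Aᵐᵒᵖ E] [Norm A] [Norm E]
    extends Inner A E where
  inner_add_right {x} {y} {z} : inner x (y + z) = inner x y + inner x z
  inner_self_nonneg {x} : 0 ≤ inner x x
  inner_self {x} : inner x x = 0 ↔ x = 0
  inner_op_smul_right {a : A} {x y : E} : inner x (y <• a) = inner x y * a
  inner_smul_right_complex {z : ℂ} {x} {y} : inner x (z • y) = z • inner x y
  star_inner x y : star (inner x y) = inner y x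
  norm_eq_sqrt_norm_inner_self x : ‖x‖ = √‖inner x x‖

section OldLemmas

variable {A E : Type*} [NonUnitalRing A] [StarRing A]
    [Module ℂ A] [AddCommGroup E] [Module ℂ E] [PartialOrder A] [SMul Aᵐᵒᵖ E] [Norm A] [Norm E]
    [CStarModuleOld A E]

theorem CStarModuleOld.inner_sub_right' (x y z : E) :
    inner A x (y - z) = inner A x y - inner A x z :=
  map_sub (AddMonoidHom.mk' (fun w : E => inner A x w)
    (fun _ _ => CStarModuleOld.inner_add_right)) y z

theorem CStarModuleOld.inner_add_left' (x y z : E) :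
    inner A (x + y) z = inner A x z + inner A y z := by
  rw [← CStarModuleOld.star_inner z (x + y), CStarModuleOld.inner_add_right, star_add,
    CStarModuleOld.star_inner, CStarModuleOld.star_inner]

theorem CStarModuleOld.inner_sub_left' (x y z : E) :
    inner A (x - y) z = inner A x z - inner A y z := by
  rw [← CStarModuleOld.star_inner z (x - y), CStarModuleOld.inner_sub_right', star_sub,
    CStarModuleOld.star_inner, CStarModuleOld.star_inner]

theorem CStarModuleOld.inner_op_smul_left' (a : A) (y z : E) :
    inner A (y <• a) z = star a * inner A y z := by
  rw [← CStarModuleOld.star_inner z (y <• a), CStarModuleOld.inner_op_smul_right, star_mul,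
    CStarModuleOld.star_inner]

end OldLemmas

theorem stmt0 {B C E F : Type*}
    [NonUnitalCStarAlgebra B] [PartialOrder B] [StarOrderedRing B]
    [NonUnitalCStarAlgebra C] [PartialOrder C] [StarOrderedRing C]
    [NormedAddCommGroup E] [NormedSpace ℂ E] [SMul Bᵐᵒᵖ E] [CStarModuleOld B E]
    [CompleteSpace E]
    [NormedAddCommGroup F] [NormedSpace ℂ F] [SMul Cᵐᵒᵖ F] [CStarModuleOld C F]
    [CompleteSpace F]
    (φ : B →⋆ₙₐ[ℂ] C) (u : E → F)
    (hu : ∀ x y : E, (inner C (u x) (u y) : C) = φ (inner B x y)) :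
    ∀ (x y : E) (b : B), u (x + y <• b) = u x + (u y) <• (φ b) := by
  intro x y b
  rw [← sub_eq_zero, ← CStarModuleOld.inner_self (A := C)]
  simp only [CStarModuleOld.inner_sub_left', CStarModuleOld.inner_sub_right',
    CStarModuleOld.inner_add_left', CStarModuleOld.inner_add_right,
    CStarModuleOld.inner_op_smul_left', CStarModuleOld.inner_op_smul_right, hu,
    CStarModuleOld.inner_add_left', map_add, map_mul, map_star]
  simp only [mul_add, add_mul, zero_mul, mul_assoc]
  abel
  simp
end

section
/- Every generalized isometry is a ternary homomorphism: if u : E → F satisfies ⟨ux, uy⟩ = φ(⟨x, y⟩) for all x, y ∈ E and some *-homomorphism φ : B → C, then u(x⟨y, z⟩) = (ux)⟨uy, uz⟩ for all x, y, z ∈ E. -/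
open scoped RightActions

theorem CStarModuleOld.inner_sub_right'_s1 {A E : Type*} [NonUnitalRing A] [StarRing A] [Module ℂ A]
    [AddCommGroup E] [Module ℂ E] [PartialOrder A] [SMul Aᵐᵒᵖ E] [Norm A] [Norm E]
    [CStarModuleOld A E] (x y z : E) :
    inner A x (y - z) = inner A x y - inner A x z := by
  have h := CStarModuleOld.inner_add_right (A := A) (x := x) (y := y - z) (z := z)
  rw [sub_add_cancel] at h
  exact eq_sub_of_add_eq h.symm

theorem CStarModuleOld.inner_sub_left'_s1 {A E : Type*} [NonUnitalRing A] [StarRing A] [Module ℂ A]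
    [AddCommGroup E] [Module ℂ E] [PartialOrder A] [SMul Aᵐᵒᵖ E] [Norm A] [Norm E]
    [CStarModuleOld A E] (x y z : E) :
    inner A (y - z) x = inner A y x - inner A z x := by
  rw [← CStarModuleOld.star_inner x (y - z), CStarModuleOld.inner_sub_right'_s1, star_sub,
    CStarModuleOld.star_inner, CStarModuleOld.star_inner]

theorem CStarModuleOld.inner_op_smul_left'_s1 {A E : Type*} [NonUnitalRing A] [StarRing A]
    [Module ℂ A] [AddCommGroup E] [Module ℂ E] [PartialOrder A] [SMul Aᵐᵒᵖ E] [Norm A] [Norm E]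
    [CStarModuleOld A E] (a : A) (x y : E) :
    inner A (x <• a) y = star a * inner A x y := by
  rw [← CStarModuleOld.star_inner y (x <• a), CStarModuleOld.inner_op_smul_right, star_mul,
    CStarModuleOld.star_inner]

theorem stmt1 {B C E F : Type*}
    [NonUnitalCStarAlgebra B] [PartialOrder B] [StarOrderedRing B]
    [NonUnitalCStarAlgebra C] [PartialOrder C] [StarOrderedRing C]
    [NormedAddCommGroup E] [NormedSpace ℂ E] [SMul Bᵐᵒᵖ E] [CStarModuleOld B E]
    [CompleteSpace E]
    [NormedAddCommGroup F] [NormedSpace ℂ F] [SMul Cᵐᵒᵖ F] [CStarModuleOld C F]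
    [CompleteSpace F]
    (φ : B →⋆ₙₐ[ℂ] C) (u : E → F)
    (hu : ∀ x y : E, (inner C (u x) (u y) : C) = φ (inner B x y)) :
    ∀ x y z : E, u (x <• (inner B y z : B)) = (u x) <• (inner C (u y) (u z) : C) := by
  intro x y z
  have key : (inner C (u (x <• (inner B y z : B)) - (u x) <• (inner C (u y) (u z) : C))
      (u (x <• (inner B y z : B)) - (u x) <• (inner C (u y) (u z) : C)) : C) = 0 := by
    simp only [CStarModuleOld.inner_sub_left'_s1, CStarModuleOld.inner_sub_right'_s1,
      CStarModuleOld.inner_op_smul_right, CStarModuleOld.inner_op_smul_left'_s1, hu,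
      map_mul, map_star, CStarModuleOld.star_inner]
    noncomm_ring
  rwa [CStarModuleOld.inner_self, sub_eq_zero] at key
end

section
/- A ternary homomorphism u from a full Hilbert B-module E to a Hilbert C-module F is injective if and only if the associated *-homomorphism φ : B → C (satisfying ⟨ux,uy⟩ = φ(⟨x,y⟩)) is injective. -/
open scoped RightActions

/-- The Hilbert C⋆-module class as it stood in the older Mathlib (right `A`-action via `Aᵐᵒᵖ`). -/
class CStarModuleRight (A E : Type*) [NonUnitalSemiring A] [StarRing A] [Module ℂ A]
    [AddCommGroup E] [Module ℂ E] [PartialOrder A] [SMul Aᵐᵒᵖ E] [Norm A] [Norm E]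
    extends Inner A E where
  inner_add_right {x} {y} {z} : inner x (y + z) = inner x y + inner x z
  inner_self_nonneg {x} : 0 ≤ inner x x
  inner_self {x} : inner x x = 0 ↔ x = 0
  inner_op_smul_right {a : A} {x y : E} : inner x (y <• a) = inner x y * a
  inner_smul_right_complex {z : ℂ} {x} {y} : inner x (z • y) = z • inner x y
  star_inner x y : star (inner x y) = inner y x
  norm_eq_sqrt_norm_inner_self x : ‖x‖ = √‖inner x x‖

namespace CStarModuleRight

theorem inner_zero_right' {A E : Type*} [NonUnitalRing A] [StarRing A] [Module ℂ A]
    [AddCommGroup E] [Module ℂ E] [PartialOrder A] [SMul Aᵐᵒᵖ E] [Norm A] [Norm E]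
    [CStarModuleRight A E] (x : E) : inner A x (0 : E) = 0 := by
  have h := CStarModuleRight.inner_add_right (A := A) (x := x) (y := (0 : E)) (z := 0)
  rw [add_zero] at h
  exact add_eq_left.mp h.symm

theorem inner_neg_right' {A E : Type*} [NonUnitalRing A] [StarRing A] [Module ℂ A]
    [AddCommGroup E] [Module ℂ E] [PartialOrder A] [SMul Aᵐᵒᵖ E] [Norm A] [Norm E]
    [CStarModuleRight A E] (x y : E) : inner A x (-y) = -inner A x y := by
  have h := CStarModuleRight.inner_add_right (A := A) (x := x) (y := y) (z := -y)
  rw [add_neg_cancel, inner_zero_right'] at h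
  exact (neg_eq_of_add_eq_zero_right h.symm).symm

theorem inner_sub_right' {A E : Type*} [NonUnitalRing A] [StarRing A] [Module ℂ A]
    [AddCommGroup E] [Module ℂ E] [PartialOrder A] [SMul Aᵐᵒᵖ E] [Norm A] [Norm E]
    [CStarModuleRight A E] (x y z : E) : inner A x (y - z) = inner A x y - inner A x z := by
  rw [sub_eq_add_neg, CStarModuleRight.inner_add_right, inner_neg_right', ← sub_eq_add_neg]

theorem inner_sub_left' {A E : Type*} [NonUnitalRing A] [StarRing A] [Module ℂ A]
    [AddCommGroup E] [Module ℂ E] [PartialOrder A] [SMul Aᵐᵒᵖ E] [Norm A] [Norm E]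
    [CStarModuleRight A E] (x y z : E) : inner A (x - y) z = inner A x z - inner A y z := by
  rw [← CStarModuleRight.star_inner z, inner_sub_right', star_sub,
    CStarModuleRight.star_inner, CStarModuleRight.star_inner]

theorem inner_op_smul_left' {A E : Type*} [NonUnitalRing A] [StarRing A] [Module ℂ A]
    [AddCommGroup E] [Module ℂ E] [PartialOrder A] [SMul Aᵐᵒᵖ E] [Norm A] [Norm E]
    [CStarModuleRight A E] (a : A) (x y : E) : inner A (x <• a) y = star a * inner A x y := by
  rw [← CStarModuleRight.star_inner y, CStarModuleRight.inner_op_smul_right, star_mul,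
    CStarModuleRight.star_inner]

end CStarModuleRight

theorem stmt5 {B C E F : Type*}
    [NonUnitalCStarAlgebra B] [PartialOrder B] [StarOrderedRing B]
    [NonUnitalCStarAlgebra C] [PartialOrder C] [StarOrderedRing C]
    [NormedAddCommGroup E] [NormedSpace ℂ E] [SMul Bᵐᵒᵖ E] [CStarModuleRight B E]
    [CompleteSpace E]
    [NormedAddCommGroup F] [NormedSpace ℂ F] [SMul Cᵐᵒᵖ F] [CStarModuleRight C F]
    [CompleteSpace F]
    (hfull : (Submodule.span ℂ {b : B | ∃ x y : E, inner B x y = b}).topologicalClosure = ⊤)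
    (u : E → F)
    (htern : ∀ x y z : E, u (x <• (inner B y z)) = (u x) <• (inner C (u y) (u z)))
    (φ : B →⋆ₙₐ[ℂ] C)
    (hφ : ∀ x y : E, inner C (u x) (u y) = φ (inner B x y)) :
    Function.Injective u ↔ Function.Injective φ := by
  have hu0 : u 0 = 0 := by
    rw [← CStarModuleRight.inner_self (A := C)]
    rw [hφ, CStarModuleRight.inner_self.mpr rfl, map_zero]
  constructor
  · intro hu
    rw [injective_iff_map_eq_zero]
    intro b hb
    -- first: x <• b = 0 for all x
    have hxb : ∀ x : E, x <• b = 0 := by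
      intro x
      apply hu
      rw [hu0, ← CStarModuleRight.inner_self (A := C), hφ,
        CStarModuleRight.inner_op_smul_left', CStarModuleRight.inner_op_smul_right,
        map_mul, map_mul, map_star, hb, star_zero, zero_mul]
    -- hence c * b = 0 for all c in the closure of the span of inner products
    set f : B →L[ℂ] B := (ContinuousLinearMap.mul ℂ B).flip b with hf
    have hT : ∀ c : B, c ∈ (⊤ : Submodule ℂ B) → c * b = 0 := by
      have hle : (Submodule.span ℂ
          {b : B | ∃ x y : E, inner B x y = b}).topologicalClosure ≤
          LinearMap.ker (f : B →ₗ[ℂ] B) := by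
        apply Submodule.topologicalClosure_minimal
        · rw [Submodule.span_le]
          rintro c ⟨x, y, rfl⟩
          simp only [SetLike.mem_coe, LinearMap.mem_ker]
          show f (inner B x y) = 0
          have : inner B x y * b = inner B x (y <• b) := by
            rw [CStarModuleRight.inner_op_smul_right]
          simp only [hf, ContinuousLinearMap.flip_apply, ContinuousLinearMap.mul_apply']
          rw [this, hxb, CStarModuleRight.inner_zero_right']
        · exact ContinuousLinearMap.isClosed_ker f
      rw [hfull] at hle
      intro c hc
      exact hle hc
    have : star b * b = 0 := hT (star b) trivial
    exact (CStarRing.star_mul_self_eq_zero_iff b).mp this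
  · intro hφinj a b hab
    have : φ (inner B (a - b) (a - b)) = 0 := by
      rw [CStarModuleRight.inner_sub_left', CStarModuleRight.inner_sub_right',
        CStarModuleRight.inner_sub_right', map_sub, map_sub, map_sub,
        ← hφ, ← hφ, ← hφ, ← hφ, hab]
      abel
    have h0 : inner B (a - b) (a - b) = 0 := by
      apply hφinj
      rw [this, map_zero]
    have := CStarModuleRight.inner_self.mp h0
    exact sub_eq_zero.mp this
end

section
/- Well-definedness of the induced derivation on inner products: let δ be a ternary derivation of a full Hilbert B-module E. If y_i, z_i ∈ dom(δ) (finitely many) satisfy Σᵢ ⟨yᵢ, zᵢ⟩ = 0, then Σᵢ (⟨δ(yᵢ), zᵢ⟩ + ⟨yᵢ, δ(zᵢ)⟩) = 0. -/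
open scoped RightActions

/-- The December 2024 Mathlib `CStarModule` (right Hilbert module, `SMul Aᵐᵒᵖ E`),
restated since Mathlib's `CStarModule` now describes left modules. -/
class RightCStarModule (A E : Type*) [NonUnitalSemiring A] [StarRing A] [Module ℂ A]
    [AddCommGroup E] [Module ℂ E] [PartialOrder A] [SMul Aᵐᵒᵖ E] [Norm A] [Norm E]
    extends Inner A E where
  inner_add_right {x} {y} {z} : inner x (y + z) = inner x y + inner x z
  inner_self_nonneg {x} : 0 ≤ inner x x
  inner_self {x} : inner x x = 0 ↔ x = 0
  inner_op_smul_right {a : A} {x y : E} : inner x (y <• a) = inner x y * a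
  inner_smul_right_complex {z : ℂ} {x} {y} : inner x (z • y) = z • inner x y
  star_inner x y : star (inner x y) = inner y x
  norm_eq_sqrt_norm_inner_self x : ‖x‖ = √‖inner x x‖

namespace RightCStarModule

variable {B E : Type*} [NonUnitalCStarAlgebra B] [PartialOrder B] [StarOrderedRing B]
  [NormedAddCommGroup E] [NormedSpace ℂ E] [SMul Bᵐᵒᵖ E] [RightCStarModule B E]

/-- The inner product in the second variable, as a linear map. -/
def innerₗ (x : E) : E →ₗ[ℂ] B where
  toFun y := inner B x y
  map_add' _ _ := RightCStarModule.inner_add_right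
  map_smul' _ _ := RightCStarModule.inner_smul_right_complex

lemma inner_zero_right {x : E} : inner B x (0 : E) = 0 := (innerₗ x).map_zero

lemma inner_sub_right {x y z : E} : inner B x (y - z) = inner B x y - inner B x z :=
  (innerₗ x).map_sub y z

lemma inner_sum_right {ι : Type*} {s : Finset ι} {x : E} {y : ι → E} :
    inner B x (∑ i ∈ s, y i) = ∑ i ∈ s, inner B x (y i) :=
  map_sum (innerₗ x) y s

lemma inner_sub_left {x y z : E} : inner B (x - y) z = inner B x z - inner B y z := by
  rw [← RightCStarModule.star_inner z (x - y), inner_sub_right, star_sub,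
    RightCStarModule.star_inner, RightCStarModule.star_inner]

lemma inner_op_smul_left {a : B} {x y : E} : inner B (x <• a) y = star a * inner B x y := by
  rw [← RightCStarModule.star_inner y, RightCStarModule.inner_op_smul_right, star_mul,
    RightCStarModule.star_inner]

lemma inner_smul_right_real {r : ℝ} {x y : E} : inner B x (r • y) = r • inner B x y := by
  rw [show r • y = (r : ℂ) • y by simp, RightCStarModule.inner_smul_right_complex]
  simp

lemma inner_smul_left_real {r : ℝ} {x y : E} : inner B (r • x) y = r • inner B x y := by
  rw [← RightCStarModule.star_inner y, inner_smul_right_real, star_smul, star_trivial,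
    RightCStarModule.star_inner]

lemma inner_mul_inner_swap_le {x y : E} :
    inner B y x * inner B x y ≤ ‖x‖ ^ 2 • inner B y y := by
  rcases eq_or_ne x 0 with h | h
  · subst h
    rw [inner_zero_right, zero_mul, norm_zero]
    simp
  · have h₁ : ∀ (a : B),
        (0 : B) ≤ ‖x‖ ^ 2 • (star a * a) - ‖x‖ ^ 2 • (star a * inner B x y)
                  - ‖x‖ ^ 2 • (inner B y x * a) + ‖x‖ ^ 2 • (‖x‖ ^ 2 • inner B y y) := fun a => by
      calc (0 : B) ≤ inner B (x <• a - ‖x‖ ^ 2 • y) (x <• a - ‖x‖ ^ 2 • y) := by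
                      exact RightCStarModule.inner_self_nonneg
            _ = star a * inner B x x * a - ‖x‖ ^ 2 • (star a * inner B x y)
                  - ‖x‖ ^ 2 • (inner B y x * a) + ‖x‖ ^ 2 • (‖x‖ ^ 2 • inner B y y) := by
                      simp only [inner_sub_right, RightCStarModule.inner_op_smul_right,
                        inner_sub_left, inner_op_smul_left, inner_smul_left_real, mul_sub,
                        mul_smul_comm, smul_mul_assoc, inner_smul_right_real, smul_sub, sub_mul, mul_assoc]
                      abel
            _ ≤ ‖x‖ ^ 2 • (star a * a) - ‖x‖ ^ 2 • (star a * inner B x y)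
                  - ‖x‖ ^ 2 • (inner B y x * a) + ‖x‖ ^ 2 • (‖x‖ ^ 2 • inner B y y) := by
                      gcongr
                      calc _ ≤ ‖inner B x x‖ • (star a * a) :=
                          CStarAlgebra.star_left_conjugate_le_norm_smul
                            (hb := RightCStarModule.star_inner x x)
                        _ = (√‖inner B x x‖) ^ 2 • (star a * a) := by
                          rw [Real.sq_sqrt]
                          positivity
                        _ = ‖x‖ ^ 2 • (star a * a) := by
                          rw [← RightCStarModule.norm_eq_sqrt_norm_inner_self (A := B) x]
    specialize h₁ (inner B x y)
    simp only [RightCStarModule.star_inner, sub_self, zero_sub, le_neg_add_iff_add_le,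
      add_zero] at h₁
    rwa [smul_le_smul_iff_of_pos_left (pow_pos (norm_pos_iff.mpr h) _)] at h₁

lemma norm_inner_le {x y : E} : ‖inner B x y‖ ≤ ‖x‖ * ‖y‖ := by
  have := calc ‖inner B x y‖ ^ 2 = ‖inner B y x * inner B x y‖ := by
                rw [← RightCStarModule.star_inner x y, CStarRing.norm_star_mul_self, pow_two]
    _ ≤ ‖‖x‖ ^ 2 • inner B y y‖ := by
                refine CStarAlgebra.norm_le_norm_of_nonneg_of_le ?_ inner_mul_inner_swap_le
                rw [← RightCStarModule.star_inner x y]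
                exact star_mul_self_nonneg (inner B x y)
    _ = ‖x‖ ^ 2 * ‖inner B y y‖ := by simp [norm_smul]
    _ = ‖x‖ ^ 2 * ‖y‖ ^ 2 := by
                rw [RightCStarModule.norm_eq_sqrt_norm_inner_self (A := B) y, Real.sq_sqrt (norm_nonneg _)]
    _ = (‖x‖ * ‖y‖) ^ 2 := by rw [mul_pow]
  exact (pow_le_pow_iff_left₀ (norm_nonneg _) (by positivity) (by simp)).mp this

lemma continuous_inner_right (x : E) : Continuous fun y : E => inner B x y :=
  (LinearMap.mkContinuous (innerₗ x) ‖x‖ fun y => by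
    exact norm_inner_le (B := B)).continuous

end RightCStarModule

/-- Well-definedness of the induced derivation on inner products. -/
theorem stmt9 {B E : Type*}
    [NonUnitalCStarAlgebra B] [PartialOrder B] [StarOrderedRing B]
    [NormedAddCommGroup E] [NormedSpace ℂ E] [SMul Bᵐᵒᵖ E] [RightCStarModule B E]
    [CompleteSpace E]
    (hfull : (Submodule.span ℂ {b : B | ∃ x y : E, (inner B x y : B) = b}).topologicalClosure = ⊤)
    (D : Submodule ℂ E) (hdense : Dense (D : Set E)) (δ : D →ₗ[ℂ] E)
    (hinv : ∀ x y z : D, (x : E) <• (inner B (y : E) (z : E) : B) ∈ D)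
    (htern : ∀ x y z : D,
      δ ⟨(x : E) <• (inner B (y : E) (z : E) : B), hinv x y z⟩ =
        δ x <• (inner B (y : E) (z : E) : B) + (x : E) <• (inner B (δ y) (z : E) : B)
          + (x : E) <• (inner B (y : E) (δ z) : B)) :
    ∀ {ι : Type} (s : Finset ι) (y z : ι → D),
      (∑ i ∈ s, (inner B (y i : E) (z i : E) : B)) = 0 →
      (∑ i ∈ s, ((inner B (δ (y i)) (z i : E) : B) + (inner B (y i : E) (δ (z i)) : B))) = 0 := by
  intro ι s y z hzero
  set T : B := ∑ i ∈ s, ((inner B (δ (y i)) (z i : E) : B) + (inner B (y i : E) (δ (z i)) : B))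
    with hT
  -- an element of E vanishing against everything is zero
  have key : ∀ v : E, (∀ u : E, (inner B u v : B) = 0) → v = 0 := fun v h =>
    RightCStarModule.inner_self.mp (h v)
  -- Step 1: for x ∈ D, the derivation rule kills the sum
  have step1 : ∀ x : D, (∑ i ∈ s,
      ((x : E) <• (inner B (δ (y i)) (z i : E) : B)
        + (x : E) <• (inner B (y i : E) (δ (z i)) : B))) = 0 := by
    intro x
    set w : ι → D := fun i => ⟨(x : E) <• (inner B (y i : E) (z i : E) : B),
      hinv x (y i) (z i)⟩ with hw
    have hwsum : (∑ i ∈ s, w i) = (0 : D) := by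
      apply Subtype.ext
      rw [AddSubmonoidClass.coe_finset_sum]
      refine key _ fun u => ?_
      simp only [hw, RightCStarModule.inner_sum_right, RightCStarModule.inner_op_smul_right,
        ← Finset.mul_sum, hzero, mul_zero]
    have hδ0 : (∑ i ∈ s, δ (w i)) = 0 := by
      rw [← map_sum, hwsum, map_zero]
    have hfirst : (∑ i ∈ s, δ x <• (inner B (y i : E) (z i : E) : B)) = 0 := by
      refine key _ fun u => ?_
      simp only [RightCStarModule.inner_sum_right, RightCStarModule.inner_op_smul_right,
        ← Finset.mul_sum, hzero, mul_zero]
    calc (∑ i ∈ s, ((x : E) <• (inner B (δ (y i)) (z i : E) : B)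
            + (x : E) <• (inner B (y i : E) (δ (z i)) : B)))
        = (∑ i ∈ s, δ x <• (inner B (y i : E) (z i : E) : B)) + ∑ i ∈ s,
            ((x : E) <• (inner B (δ (y i)) (z i : E) : B)
              + (x : E) <• (inner B (y i : E) (δ (z i)) : B)) := by rw [hfirst, zero_add]
      _ = ∑ i ∈ s, (δ x <• (inner B (y i : E) (z i : E) : B)
            + ((x : E) <• (inner B (δ (y i)) (z i : E) : B)
              + (x : E) <• (inner B (y i : E) (δ (z i)) : B))) := by
            simp only [Finset.sum_add_distrib]
      _ = ∑ i ∈ s, δ (w i) := by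
            refine Finset.sum_congr rfl fun i _ => ?_
            rw [hw, htern x (y i) (z i)]
            abel
      _ = 0 := hδ0
  -- Step 2: inner B products of D-elements annihilate T
  have step2 : ∀ (u : E) (x : D), (inner B u (x : E) : B) * T = 0 := by
    intro u x
    have := congrArg (fun v => (inner B u v : B)) (step1 x)
    simpa only [hT, RightCStarModule.inner_sum_right, RightCStarModule.inner_add_right,
      RightCStarModule.inner_op_smul_right, ← mul_add, ← Finset.mul_sum,
      RightCStarModule.inner_zero_right] using this
  -- Step 3: by density, all inner B products annihilate T
  have step3 : ∀ u v : E, (inner B u v : B) * T = 0 := by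
    intro u v
    have hcont : Continuous fun v : E => (inner B u v : B) * T :=
      (RightCStarModule.continuous_inner_right u).mul continuous_const
    have hclosed : IsClosed {v : E | (inner B u v : B) * T = 0} :=
      isClosed_eq hcont continuous_const
    have hsub : (D : Set E) ⊆ {v : E | (inner B u v : B) * T = 0} := fun v hv =>
      step2 u ⟨v, hv⟩
    exact closure_minimal hsub hclosed (hdense v)
  -- Step 4: by fullness, everything annihilates T
  have step4 : ∀ b : B, b * T = 0 := by
    intro b
    set f := (ContinuousLinearMap.mul ℂ B).flip T with hf
    have hker : Submodule.span ℂ {b : B | ∃ x y : E, (inner B x y : B) = b} ≤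
        LinearMap.ker (f : B →ₗ[ℂ] B) := by
      rw [Submodule.span_le]
      rintro _ ⟨x', y', rfl⟩
      exact step3 x' y'
    have hclosed : IsClosed ((LinearMap.ker (f : B →ₗ[ℂ] B) : Submodule ℂ B) : Set B) :=
      ContinuousLinearMap.isClosed_ker f
    have := Submodule.topologicalClosure_minimal _ hker hclosed
    rw [hfull] at this
    exact this Submodule.mem_top
  have := step4 (star T)
  exact CStarRing.star_mul_self_eq_zero_iff T |>.mp this
end

section
/- Every ternary derivation δ of a full Hilbert B-module E is a generalized derivation: there is a unique derivation d_δ on the dense domain span⟨dom(δ), dom(δ)⟩ ⊂ B satisfying d_δ(⟨x,y⟩) = ⟨δ(x), y⟩ + ⟨x, δ(y)⟩ for x, y ∈ dom(δ); moreover δ(xb) = δ(x)b + x·d_δ(b) for x ∈ dom(δ), b ∈ span⟨dom(δ),dom(δ)⟩, and d_δ is a *-derivation (d_δ(b*) = d_δ(b)*). -/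
open scoped RightActions

/-- The December 2024 Mathlib `CStarModule` (right Hilbert modules: `SMul Aᵐᵒᵖ E`, inner product
`A`-linear in the second argument for the right action), which Mathlib has since replaced by
left modules. Kept verbatim under a new name. -/
class HilbertCStarModuleOld (A E : Type*) [NonUnitalSemiring A] [StarRing A] [Module ℂ A]
    [AddCommGroup E] [Module ℂ E] [PartialOrder A] [SMul Aᵐᵒᵖ E] [Norm A] [Norm E]
    extends Inner A E where
  inner_add_right {x} {y} {z} : inner x (y + z) = inner x y + inner x z
  inner_self_nonneg {x} : 0 ≤ inner x x
  inner_self {x} : inner x x = 0 ↔ x = 0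
  inner_op_smul_right {a : A} {x y : E} : inner x (y <• a) = inner x y * a
  inner_smul_right_complex {z : ℂ} {x} {y} : inner x (z • y) = z • inner x y
  star_inner x y : star (inner x y) = inner y x
  norm_eq_sqrt_norm_inner_self x : ‖x‖ = √‖inner x x‖

namespace HilbertCStarModuleOld

section OldHelpers

variable {B E : Type*} [NonUnitalCStarAlgebra B] [PartialOrder B]
  [NormedAddCommGroup E] [NormedSpace ℂ E] [SMul Bᵐᵒᵖ E] [HilbertCStarModuleOld B E]

theorem inner_sub_right' (x y z : E) : inner B x (y - z) = inner B x y - inner B x z :=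
  (AddMonoidHom.mk' (fun w : E => inner B x w) fun _ _ => HilbertCStarModuleOld.inner_add_right).map_sub y z

theorem inner_zero_right' (x : E) : inner B x (0 : E) = 0 :=
  (AddMonoidHom.mk' (fun w : E => inner B x w) fun _ _ => HilbertCStarModuleOld.inner_add_right).map_zero

@[simp]
theorem inner_op_smul_right' (a : B) (x y : E) : inner B x (y <• a) = inner B x y * a :=
  HilbertCStarModuleOld.inner_op_smul_right

@[simp]
theorem star_inner' (x y : E) : star (inner B x y) = inner B y x :=
  HilbertCStarModuleOld.star_inner x y

@[simp]
theorem inner_op_smul_left' (a : B) (x y : E) : inner B (x <• a) y = star a * inner B x y := by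
  rw [← HilbertCStarModuleOld.star_inner y, HilbertCStarModuleOld.inner_op_smul_right, star_mul,
    HilbertCStarModuleOld.star_inner]

theorem norm_sq_eq' (x : E) : ‖x‖ ^ 2 = ‖inner B x x‖ := by
  rw [HilbertCStarModuleOld.norm_eq_sqrt_norm_inner_self (A := B) x, Real.sq_sqrt (norm_nonneg _)]

end OldHelpers

end HilbertCStarModuleOld

/-- Every ternary derivation of a full Hilbert module is a generalized derivation:
existence and uniqueness of the `*`-derivation `d_δ` on `span⟨dom δ, dom δ⟩`. -/
theorem stmt10 {B E : Type*}
    [NonUnitalCStarAlgebra B] [PartialOrder B] [StarOrderedRing B]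
    [NormedAddCommGroup E] [NormedSpace ℂ E] [SMul Bᵐᵒᵖ E] [HilbertCStarModuleOld B E]
    [CompleteSpace E]
    (hfull : (Submodule.span ℂ {b : B | ∃ x y : E, (inner B x y : B) = b}).topologicalClosure = ⊤)
    (D : Submodule ℂ E) (hdense : Dense (D : Set E)) (δ : D →ₗ[ℂ] E)
    (hinv : ∀ x y z : D, (x : E) <• (inner B (y : E) (z : E) : B) ∈ D)
    (htern : ∀ x y z : D,
      δ ⟨(x : E) <• (inner B (y : E) (z : E) : B), hinv x y z⟩ =
        δ x <• (inner B (y : E) (z : E) : B) + (x : E) <• (inner B (δ y) (z : E) : B)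
          + (x : E) <• (inner B (y : E) (δ z) : B)) :
    ∃ d : (Submodule.span ℂ {b : B | ∃ x y : D, (inner B (x : E) (y : E) : B) = b}) →ₗ[ℂ] B,
      -- `d` satisfies (3.1)
      (∀ x y : D, d ⟨(inner B (x : E) (y : E) : B), Submodule.subset_span ⟨x, y, rfl⟩⟩ =
          (inner B (δ x) (y : E) : B) + (inner B (x : E) (δ y) : B)) ∧
      -- `d` is the unique linear map on this domain satisfying (3.1)
      (∀ d' : (Submodule.span ℂ {b : B | ∃ x y : D, (inner B (x : E) (y : E) : B) = b}) →ₗ[ℂ] B,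
        (∀ x y : D, d' ⟨(inner B (x : E) (y : E) : B), Submodule.subset_span ⟨x, y, rfl⟩⟩ =
          (inner B (δ x) (y : E) : B) + (inner B (x : E) (δ y) : B)) → d' = d) ∧
      -- `d` turns `δ` into a `d`-derivation
      (∀ (x : D) (b : Submodule.span ℂ {b : B | ∃ x y : D, (inner B (x : E) (y : E) : B) = b})
        (h : (x : E) <• (b : B) ∈ D),
        δ ⟨(x : E) <• (b : B), h⟩ = δ x <• (b : B) + (x : E) <• d b) ∧
      -- `d` is a derivation (Leibniz rule)
      (∀ (b b' : Submodule.span ℂ {b : B | ∃ x y : D, (inner B (x : E) (y : E) : B) = b})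
        (h : (b : B) * (b' : B) ∈
          Submodule.span ℂ {b : B | ∃ x y : D, (inner B (x : E) (y : E) : B) = b}),
        d ⟨(b : B) * (b' : B), h⟩ = d b * (b' : B) + (b : B) * d b') ∧
      -- `d` is a `*`-derivation
      (∀ (b : Submodule.span ℂ {b : B | ∃ x y : D, (inner B (x : E) (y : E) : B) = b})
        (h : star (b : B) ∈
          Submodule.span ℂ {b : B | ∃ x y : D, (inner B (x : E) (y : E) : B) = b}),
        d ⟨star (b : B), h⟩ = star (d b)) := by
  classical
  -- elements of `E` are determined by inner products against all of `E`
  have ext_inner : ∀ u v : E, (∀ z : E, (inner B z u : B) = inner B z v) → u = v := by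
    intro u v h
    have h2 : (inner B (u - v) (u - v) : B) = 0 := by
      rw [HilbertCStarModuleOld.inner_sub_right', h (u - v), sub_self]
    exact sub_eq_zero.mp (HilbertCStarModuleOld.inner_self.mp h2)
  -- module laws for the right action, derived from the inner product
  have hsmul_add : ∀ (x : E) (a a' : B), x <• (a + a') = x <• a + x <• a' :=
    fun x a a' => ext_inner _ _ fun z => by
      rw [HilbertCStarModuleOld.inner_op_smul_right, HilbertCStarModuleOld.inner_add_right,
        HilbertCStarModuleOld.inner_op_smul_right, HilbertCStarModuleOld.inner_op_smul_right, mul_add]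
  have hsmul_smulc : ∀ (x : E) (c : ℂ) (a : B), x <• (c • a) = c • (x <• a) :=
    fun x c a => ext_inner _ _ fun z => by
      rw [HilbertCStarModuleOld.inner_op_smul_right, HilbertCStarModuleOld.inner_smul_right_complex,
        HilbertCStarModuleOld.inner_op_smul_right, mul_smul_comm]
  have hsmul_zero : ∀ x : E, x <• (0 : B) = 0 := fun x => ext_inner _ _ fun z => by
    rw [HilbertCStarModuleOld.inner_op_smul_right, mul_zero, HilbertCStarModuleOld.inner_zero_right']
  have hsub_smul : ∀ (x y : E) (a : B), (x - y) <• a = x <• a - y <• a :=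
    fun x y a => ext_inner _ _ fun z => by
      rw [HilbertCStarModuleOld.inner_op_smul_right, HilbertCStarModuleOld.inner_sub_right',
        HilbertCStarModuleOld.inner_sub_right', HilbertCStarModuleOld.inner_op_smul_right,
        HilbertCStarModuleOld.inner_op_smul_right, sub_mul]
  -- norm estimate and continuity of the right action
  have hnorm : ∀ (x : E) (a : B), ‖x <• a‖ ≤ ‖x‖ * ‖a‖ := by
    intro x a
    have key : ‖x <• a‖ ^ 2 ≤ (‖x‖ * ‖a‖) ^ 2 := by
      rw [HilbertCStarModuleOld.norm_sq_eq' (B := B)]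
      have h2 : (inner B (x <• a) (x <• a) : B) = star a * ((inner B x x : B) * a) := by
        simp [mul_assoc]
      rw [h2]
      calc ‖star a * ((inner B x x : B) * a)‖ ≤ ‖star a‖ * (‖(inner B x x : B)‖ * ‖a‖) :=
            (norm_mul_le _ _).trans (by gcongr; exact norm_mul_le _ _)
        _ = ‖a‖ * (‖x‖ ^ 2 * ‖a‖) := by rw [norm_star, ← HilbertCStarModuleOld.norm_sq_eq' (B := B)]
        _ = (‖x‖ * ‖a‖) ^ 2 := by ring
    exact (pow_le_pow_iff_left₀ (norm_nonneg _) (by positivity) (by norm_num)).mp key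
  have hcont : ∀ a : B, Continuous fun x : E => x <• a := by
    intro a
    refine (LipschitzWith.of_dist_le_mul (K := ‖a‖₊) fun x y => ?_).continuous
    rw [dist_eq_norm, dist_eq_norm, ← hsub_smul]
    exact (hnorm _ _).trans (le_of_eq (by rw [coe_nnnorm, mul_comm]))
  -- vanishing lemma: if `z <• c = 0` for all `z` in the dense domain, then `c = 0`
  have hvanish : ∀ c : B, (∀ z : D, (z : E) <• c = 0) → c = 0 := by
    intro c hc
    have hall : ∀ z : E, z <• c = 0 := by
      have hcl : IsClosed {z : E | z <• c = 0} := isClosed_eq (hcont c) continuous_const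
      have hsub : closure (D : Set E) ⊆ {z : E | z <• c = 0} :=
        closure_minimal (fun z hz => hc ⟨z, hz⟩) hcl
      rw [hdense.closure_eq] at hsub
      exact fun z => hsub (Set.mem_univ z)
    let T : Submodule ℂ B :=
      { carrier := {b : B | b * c = 0}
        add_mem' := fun {a b} ha hb => by
          simp only [Set.mem_setOf_eq] at *; rw [add_mul, ha, hb, add_zero]
        zero_mem' := by simp
        smul_mem' := fun r b hb => by
          simp only [Set.mem_setOf_eq] at *; rw [smul_mul_assoc, hb, smul_zero] }
    have hTclosed : IsClosed (T : Set B) :=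
      isClosed_eq (continuous_mul_right c) continuous_const
    have h1 : Submodule.span ℂ {b : B | ∃ x y : E, (inner B x y : B) = b} ≤ T := by
      rw [Submodule.span_le]
      rintro b ⟨x, y, rfl⟩
      show (inner B x y : B) * c = 0
      rw [← HilbertCStarModuleOld.inner_op_smul_right, hall y, HilbertCStarModuleOld.inner_zero_right']
    have h2 : (⊤ : Submodule ℂ B) ≤ T :=
      hfull ▸ Submodule.topologicalClosure_minimal _ h1 hTclosed
    have h3 : star c * c = 0 := h2 Submodule.mem_top
    exact (CStarRing.star_mul_self_eq_zero_iff c).mp h3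
  -- the graph submodule
  set G : Submodule ℂ (B × B) := Submodule.span ℂ
    {p : B × B | ∃ x y : D, p = ((inner B (x : E) (y : E) : B),
       (inner B (δ x) (y : E) : B) + (inner B (x : E) (δ y) : B))} with hGdef
  -- the key derivation property over the graph
  have hG : ∀ p ∈ G, ∀ z : D, ∃ hm : (z : E) <• p.1 ∈ D,
      δ ⟨(z : E) <• p.1, hm⟩ = δ z <• p.1 + (z : E) <• p.2 := by
    intro p hp
    induction hp using Submodule.span_induction with
    | mem p hpm =>
      obtain ⟨x, y, rfl⟩ := hpm
      intro z
      refine ⟨hinv z x y, ?_⟩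
      show δ ⟨(z : E) <• (inner B (x : E) (y : E) : B), hinv z x y⟩ =
        δ z <• (inner B (x : E) (y : E) : B) +
          (z : E) <• ((inner B (δ x) (y : E) : B) + (inner B (x : E) (δ y) : B))
      rw [htern z x y, hsmul_add, add_assoc]
    | zero =>
      intro z
      have hm : (z : E) <• (0 : B × B).1 ∈ D := by
        rw [Prod.fst_zero, hsmul_zero]; exact D.zero_mem
      refine ⟨hm, ?_⟩
      have he : (⟨(z : E) <• (0 : B × B).1, hm⟩ : D) = 0 :=
        Subtype.ext (by
          show (z : E) <• (0 : B × B).1 = 0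
          rw [Prod.fst_zero, hsmul_zero])
      rw [he, map_zero, Prod.fst_zero, Prod.snd_zero, hsmul_zero, hsmul_zero, add_zero]
    | add p q hp hq ihp ihq =>
      intro z
      obtain ⟨hm1, he1⟩ := ihp z
      obtain ⟨hm2, he2⟩ := ihq z
      have hm : (z : E) <• (p + q).1 ∈ D := by
        rw [Prod.fst_add, hsmul_add]; exact D.add_mem hm1 hm2
      refine ⟨hm, ?_⟩
      have he : (⟨(z : E) <• (p + q).1, hm⟩ : D)
          = ⟨(z : E) <• p.1, hm1⟩ + ⟨(z : E) <• q.1, hm2⟩ :=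
        Subtype.ext (by
          show (z : E) <• (p + q).1 = (z : E) <• p.1 + (z : E) <• q.1
          rw [Prod.fst_add, hsmul_add])
      rw [he, map_add, he1, he2, Prod.fst_add, Prod.snd_add, hsmul_add, hsmul_add]
      abel
    | smul c p hp ihp =>
      intro z
      obtain ⟨hm1, he1⟩ := ihp z
      have hm : (z : E) <• (c • p).1 ∈ D := by
        rw [Prod.smul_fst, hsmul_smulc]; exact D.smul_mem c hm1
      refine ⟨hm, ?_⟩
      have he : (⟨(z : E) <• (c • p).1, hm⟩ : D) = c • (⟨(z : E) <• p.1, hm1⟩ : D) :=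
        Subtype.ext (by
          show (z : E) <• (c • p).1 = c • ((z : E) <• p.1)
          rw [Prod.smul_fst, hsmul_smulc])
      rw [he, map_smul, he1, Prod.smul_fst, Prod.smul_snd, hsmul_smulc, hsmul_smulc, smul_add]
  -- the graph is the graph of a function
  have huniq : ∀ (b c₁ c₂ : B), (b, c₁) ∈ G → (b, c₂) ∈ G → c₁ = c₂ := by
    intro b c₁ c₂ h1 h2
    have hd : ((0 : B), c₁ - c₂) ∈ G := by
      have := G.sub_mem h1 h2
      simpa [Prod.mk_sub_mk] using this
    have hz : ∀ z : D, (z : E) <• (c₁ - c₂) = 0 := by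
      intro z
      obtain ⟨hm, he⟩ := hG _ hd z
      have h0 : (⟨(z : E) <• ((0 : B), c₁ - c₂).1, hm⟩ : D) = 0 :=
        Subtype.ext (hsmul_zero _)
      rw [h0, map_zero] at he
      have he2 : (0 : E) = δ z <• (0 : B) + (z : E) <• (c₁ - c₂) := he
      rw [hsmul_zero, zero_add] at he2
      exact he2.symm
    exact sub_eq_zero.mp (hvanish _ hz)
  -- every element of the span appears as a first coordinate in the graph
  have hexists : ∀ b ∈ Submodule.span ℂ {b : B | ∃ x y : D, (inner B (x : E) (y : E) : B) = b},
      ∃ c : B, (b, c) ∈ G := by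
    intro b hb
    induction hb using Submodule.span_induction with
    | mem b hbm =>
      obtain ⟨x, y, rfl⟩ := hbm
      exact ⟨_, Submodule.subset_span ⟨x, y, rfl⟩⟩
    | zero => exact ⟨0, G.zero_mem⟩
    | add b b' hb hb' ih ih' =>
      obtain ⟨c, hc⟩ := ih
      obtain ⟨c', hc'⟩ := ih'
      exact ⟨c + c', by simpa [Prod.mk_add_mk] using G.add_mem hc hc'⟩
    | smul a b hb ih =>
      obtain ⟨c, hc⟩ := ih
      exact ⟨a • c, by simpa [Prod.smul_mk] using G.smul_mem a hc⟩
  choose! dfun hdfun using hexists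
  -- the linear map `d`
  refine ⟨{ toFun := fun b => dfun (b : B)
            map_add' := fun b b' => huniq _ _ _ (hdfun _ (b + b').2)
              (by simpa [Prod.mk_add_mk] using G.add_mem (hdfun _ b.2) (hdfun _ b'.2))
            map_smul' := fun a b => huniq _ _ _ (hdfun _ (a • b).2)
              (by simpa [Prod.smul_mk] using G.smul_mem a (hdfun _ b.2)) }, ?_, ?_, ?_, ?_, ?_⟩
  case _ =>
    intro x y
    exact huniq _ _ _ (hdfun _ (Submodule.subset_span ⟨x, y, rfl⟩))
      (Submodule.subset_span ⟨x, y, rfl⟩)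
  case _ =>
    intro d' hd'
    have h31 : ∀ x y : D, dfun (inner B (x : E) (y : E) : B) =
        (inner B (δ x) (y : E) : B) + (inner B (x : E) (δ y) : B) :=
      fun x y => huniq _ _ _ (hdfun _ (Submodule.subset_span ⟨x, y, rfl⟩))
        (Submodule.subset_span ⟨x, y, rfl⟩)
    have hagree : ∀ (b : B)
        (hb : b ∈ Submodule.span ℂ {b : B | ∃ x y : D, (inner B (x : E) (y : E) : B) = b}),
        d' ⟨b, hb⟩ = dfun b := by
      intro b hb
      induction hb using Submodule.span_induction with
      | mem b hbm =>
        obtain ⟨x, y, rfl⟩ := hbm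
        exact (hd' x y).trans (h31 x y).symm
      | zero =>
        show d' 0 = dfun (0 : B)
        rw [map_zero]
        exact huniq _ _ _ G.zero_mem (hdfun _ (Submodule.zero_mem _))
      | add b b' hb hb' ih ih' =>
        show d' (⟨b, hb⟩ + ⟨b', hb'⟩) = dfun (b + b')
        rw [map_add, ih, ih']
        exact (huniq _ _ _
          (by simpa [Prod.mk_add_mk] using G.add_mem (hdfun _ hb) (hdfun _ hb'))
          (hdfun _ (Submodule.add_mem _ hb hb'))).symm ▸ rfl
      | smul a b hb ih =>
        show d' (a • (⟨b, hb⟩ :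
          Submodule.span ℂ {b : B | ∃ x y : D, (inner B (x : E) (y : E) : B) = b})) = dfun (a • b)
        rw [map_smul, ih]
        exact (huniq _ _ _
          (by simpa [Prod.smul_mk] using G.smul_mem a (hdfun _ hb))
          (hdfun _ (Submodule.smul_mem _ a hb))).symm ▸ rfl
    exact LinearMap.ext fun b => hagree b.1 b.2
  case _ =>
    intro x b h
    obtain ⟨hm, he⟩ := hG _ (hdfun _ b.2) x
    exact he
  case _ =>
    have hmulG : ∀ p ∈ G, ∀ q ∈ G, (p.1 * q.1, p.2 * q.1 + p.1 * q.2) ∈ G := by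
      intro p hp
      induction hp using Submodule.span_induction with
      | mem p hpm =>
        intro q hq
        induction hq using Submodule.span_induction with
        | mem q hqm =>
          obtain ⟨x, y, rfl⟩ := hpm
          obtain ⟨z, w, rfl⟩ := hqm
          refine Submodule.subset_span
            ⟨x, ⟨(y : E) <• (inner B (z : E) (w : E) : B), hinv y z w⟩, ?_⟩
          have h1 : (inner B (x : E) ((y : E) <• (inner B (z : E) (w : E) : B)) : B) =
              (inner B (x : E) (y : E) : B) * (inner B (z : E) (w : E) : B) := by simp
          have h2 : (inner B (δ x) ((y : E) <• (inner B (z : E) (w : E) : B)) : B) =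
              (inner B (δ x) (y : E) : B) * (inner B (z : E) (w : E) : B) := by simp
          refine Prod.ext (by simp) ?_
          show (inner B (δ x) (y : E) + inner B (x : E) (δ y) : B) *
              (inner B (z : E) (w : E) : B) + (inner B (x : E) (y : E) : B) *
              (inner B (δ z) (w : E) + inner B (z : E) (δ w) : B) =
            (inner B (δ x) ((y : E) <• (inner B (z : E) (w : E) : B)) : B) +
              (inner B (x : E) (δ (⟨(y : E) <• (inner B (z : E) (w : E) : B), hinv y z w⟩ : D)) : B)
          rw [htern y z w, h2]
          simp only [HilbertCStarModuleOld.inner_add_right, HilbertCStarModuleOld.inner_op_smul_right]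
          rw [add_mul, mul_add]
          abel
        | zero =>
          have h0 : ((p.1 * (0 : B × B).1, p.2 * (0 : B × B).1 + p.1 * (0 : B × B).2) : B × B)
              = 0 := by simp [Prod.ext_iff]
          rw [h0]; exact G.zero_mem
        | add q q' hq hq' ih ih' =>
          have he : ((p.1 * (q + q').1, p.2 * (q + q').1 + p.1 * (q + q').2) : B × B)
              = (p.1 * q.1, p.2 * q.1 + p.1 * q.2) + (p.1 * q'.1, p.2 * q'.1 + p.1 * q'.2) := by
            simp only [Prod.fst_add, Prod.snd_add, mul_add, Prod.mk_add_mk, Prod.mk.injEq]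
            exact ⟨trivial, by abel⟩
          rw [he]; exact G.add_mem ih ih'
        | smul a q hq ih =>
          have he : ((p.1 * (a • q).1, p.2 * (a • q).1 + p.1 * (a • q).2) : B × B)
              = a • (p.1 * q.1, p.2 * q.1 + p.1 * q.2) := by
            simp only [Prod.smul_fst, Prod.smul_snd, mul_smul_comm, Prod.smul_mk, smul_add]
          rw [he]; exact G.smul_mem a ih
      | zero =>
        intro q hq
        have h0 : (((0 : B × B).1 * q.1, (0 : B × B).2 * q.1 + (0 : B × B).1 * q.2) : B × B)
            = 0 := by simp [Prod.ext_iff]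
        rw [h0]; exact G.zero_mem
      | add p p' hp hp' ih ih' =>
        intro q hq
        have he : (((p + p').1 * q.1, (p + p').2 * q.1 + (p + p').1 * q.2) : B × B)
            = (p.1 * q.1, p.2 * q.1 + p.1 * q.2) + (p'.1 * q.1, p'.2 * q.1 + p'.1 * q.2) := by
          simp only [Prod.fst_add, Prod.snd_add, add_mul, Prod.mk_add_mk, Prod.mk.injEq]
          exact ⟨trivial, by abel⟩
        rw [he]; exact G.add_mem (ih q hq) (ih' q hq)
      | smul a p hp ih =>
        intro q hq
        have he : (((a • p).1 * q.1, (a • p).2 * q.1 + (a • p).1 * q.2) : B × B)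
            = a • (p.1 * q.1, p.2 * q.1 + p.1 * q.2) := by
          simp only [Prod.smul_fst, Prod.smul_snd, smul_mul_assoc, Prod.smul_mk, smul_add]
        rw [he]; exact G.smul_mem a (ih q hq)
    intro b b' h
    exact huniq _ _ _ (hdfun _ h) (hmulG _ (hdfun _ b.2) _ (hdfun _ b'.2))
  case _ =>
    have hstarG : ∀ p ∈ G, (star p.1, star p.2) ∈ G := by
      intro p hp
      induction hp using Submodule.span_induction with
      | mem p hpm =>
        obtain ⟨x, y, rfl⟩ := hpm
        refine Submodule.subset_span ⟨y, x, ?_⟩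
        refine Prod.ext (by simp) ?_
        show star ((inner B (δ x) (y : E) : B) + (inner B (x : E) (δ y) : B)) =
          (inner B (δ y) (x : E) : B) + (inner B (y : E) (δ x) : B)
        rw [star_add, HilbertCStarModuleOld.star_inner, HilbertCStarModuleOld.star_inner, add_comm]
      | zero =>
        have h0 : ((star (0 : B × B).1, star (0 : B × B).2) : B × B) = 0 := by
          simp [Prod.ext_iff]
        rw [h0]; exact G.zero_mem
      | add p p' hp hp' ih ih' =>
        have he : ((star (p + p').1, star (p + p').2) : B × B)
            = (star p.1, star p.2) + (star p'.1, star p'.2) := by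
          simp [Prod.ext_iff, star_add]
        rw [he]; exact G.add_mem ih ih'
      | smul a p hp ih =>
        have he : ((star (a • p).1, star (a • p).2) : B × B)
            = (starRingEnd ℂ a) • (star p.1, star p.2) := by
          refine Prod.ext ?_ ?_ <;>
            simp only [Prod.smul_fst, Prod.smul_snd, star_smul, Prod.smul_mk,
              starRingEnd_apply]
        rw [he]; exact G.smul_mem _ ih
    intro b h
    exact huniq _ _ _ (hdfun _ h) (hstarG _ (hdfun _ b.2))
end

section
/- The map d_δ defined by d_δ(⟨x,y⟩) = ⟨δ(x),y⟩ + ⟨x,δ(y)⟩ for a ternary derivation δ satisfies the Leibniz rule: d_δ(bb') = d_δ(b)b' + b·d_δ(b') for all b, b' ∈ span⟨dom(δ), dom(δ)⟩. -/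
open scoped RightActions

/-- The induced map `d_δ` on `span⟨dom δ, dom δ⟩` satisfies the Leibniz rule. -/
theorem stmt11 {B E : Type*}
    [NonUnitalCStarAlgebra B] [PartialOrder B] [StarOrderedRing B]
    [NormedAddCommGroup E] [NormedSpace ℂ E] [SMul Bᵐᵒᵖ E] [CStarModuleOld B E]
    [CompleteSpace E]
    (hfull : (Submodule.span ℂ {b : B | ∃ x y : E, (inner B x y : B) = b}).topologicalClosure = ⊤)
    (D : Submodule ℂ E) (hdense : Dense (D : Set E)) (δ : D →ₗ[ℂ] E)
    (hinv : ∀ x y z : D, (x : E) <• (inner B (y : E) (z : E) : B) ∈ D)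
    (htern : ∀ x y z : D,
      δ ⟨(x : E) <• (inner B (y : E) (z : E) : B), hinv x y z⟩ =
        δ x <• (inner B (y : E) (z : E) : B) + (x : E) <• (inner B (δ y) (z : E) : B)
          + (x : E) <• (inner B (y : E) (δ z) : B))
    (d : (Submodule.span ℂ {b : B | ∃ x y : D, (inner B (x : E) (y : E) : B) = b}) →ₗ[ℂ] B)
    (hd : ∀ x y : D, d ⟨(inner B (x : E) (y : E) : B),
        Submodule.subset_span ⟨x, y, rfl⟩⟩ =
      (inner B (δ x) (y : E) : B) + (inner B (x : E) (δ y) : B)) :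
    ∀ (b b' : Submodule.span ℂ {b : B | ∃ x y : D, (inner B (x : E) (y : E) : B) = b})
      (h : (b : B) * (b' : B) ∈ Submodule.span ℂ {b : B | ∃ x y : D, (inner B (x : E) (y : E) : B) = b}),
      d ⟨(b : B) * (b' : B), h⟩ = d b * (b' : B) + (b : B) * d b' := by
  -- products of generators are generators
  have hgenmul : ∀ a ∈ {b : B | ∃ x y : D, (inner B (x : E) (y : E) : B) = b},
      ∀ c ∈ {b : B | ∃ x y : D, (inner B (x : E) (y : E) : B) = b},
      a * c ∈ {b : B | ∃ x y : D, (inner B (x : E) (y : E) : B) = b} := by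
    rintro _ ⟨x, y, rfl⟩ _ ⟨x', y', rfl⟩
    refine ⟨x, ⟨(y : E) <• (inner B (x' : E) (y' : E) : B), hinv y x' y'⟩, ?_⟩
    exact CStarModuleOld.inner_op_smul_right
  -- the span is closed under multiplication
  have hmul : ∀ a ∈ Submodule.span ℂ {b : B | ∃ x y : D, (inner B (x : E) (y : E) : B) = b},
      ∀ c ∈ Submodule.span ℂ {b : B | ∃ x y : D, (inner B (x : E) (y : E) : B) = b},
      a * c ∈ Submodule.span ℂ {b : B | ∃ x y : D, (inner B (x : E) (y : E) : B) = b} := by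
    intro a ha c hc
    induction ha, hc using Submodule.span_induction₂ with
    | mem_mem a c ha hc => exact Submodule.subset_span (hgenmul a ha c hc)
    | zero_left c hc => simpa [zero_mul] using Submodule.zero_mem _
    | zero_right a ha => simpa [mul_zero] using Submodule.zero_mem _
    | add_left a a' c ha ha' hc ih ih' => simpa [add_mul] using Submodule.add_mem _ ih ih'
    | add_right a c c' ha hc hc' ih ih' => simpa [mul_add] using Submodule.add_mem _ ih ih'
    | smul_left r a c ha hc ih => simpa [smul_mul_assoc] using Submodule.smul_mem _ r ih
    | smul_right r a c ha hc ih => simpa [mul_smul_comm] using Submodule.smul_mem _ r ih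
  -- congruence and linearity of `d` on values
  have dcongr : ∀ (m : Submodule.span ℂ {b : B | ∃ x y : D, (inner B (x : E) (y : E) : B) = b})
      (b : B) (hb : b ∈ Submodule.span ℂ {b : B | ∃ x y : D, (inner B (x : E) (y : E) : B) = b}),
      (m : B) = b → d m = d ⟨b, hb⟩ := by
    rintro ⟨m, hm⟩ b hb rfl; rfl
  have dzero : ∀ h, d ⟨(0 : B), h⟩ = 0 := by
    intro h
    have : (⟨(0 : B), h⟩ : Submodule.span ℂ
        {b : B | ∃ x y : D, (inner B (x : E) (y : E) : B) = b}) = 0 := rfl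
    rw [this, map_zero]
  have dadd : ∀ a a' ha ha' h, d ⟨a + a', h⟩ = d ⟨a, ha⟩ + d ⟨a', ha'⟩ := by
    intro a a' ha ha' h
    have : (⟨a + a', h⟩ : Submodule.span ℂ
        {b : B | ∃ x y : D, (inner B (x : E) (y : E) : B) = b}) = ⟨a, ha⟩ + ⟨a', ha'⟩ := rfl
    rw [this, map_add]
  have dsmul : ∀ (r : ℂ) a ha h, d ⟨r • a, h⟩ = r • d ⟨a, ha⟩ := by
    intro r a ha h
    have : (⟨r • a, h⟩ : Submodule.span ℂ
        {b : B | ∃ x y : D, (inner B (x : E) (y : E) : B) = b}) = r • (⟨a, ha⟩ : Submodule.span ℂ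
        {b : B | ∃ x y : D, (inner B (x : E) (y : E) : B) = b}) := rfl
    rw [this, map_smul]
  -- main claim by double span induction
  have key : ∀ a (ha : a ∈ Submodule.span ℂ {b : B | ∃ x y : D, (inner B (x : E) (y : E) : B) = b})
      c (hc : c ∈ Submodule.span ℂ {b : B | ∃ x y : D, (inner B (x : E) (y : E) : B) = b})
      (h : a * c ∈ Submodule.span ℂ {b : B | ∃ x y : D, (inner B (x : E) (y : E) : B) = b}),
      d ⟨a * c, h⟩ = d ⟨a, ha⟩ * c + a * d ⟨c, hc⟩ := by
    intro a ha c hc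
    induction ha, hc using Submodule.span_induction₂ with
    | mem_mem a c ha hc =>
      intro h
      obtain ⟨x, y, rfl⟩ := ha
      obtain ⟨x', y', rfl⟩ := hc
      set z : D := ⟨(y : E) <• (inner B (x' : E) (y' : E) : B), hinv y x' y'⟩ with hz
      have hprod : (inner B (x : E) (y : E) : B) * (inner B (x' : E) (y' : E) : B)
          = (inner B (x : E) (z : E) : B) := (CStarModuleOld.inner_op_smul_right).symm
      rw [dcongr _ _ (Submodule.subset_span ⟨x, z, rfl⟩) hprod, hd x z, hd x y, hd x' y']
      have hδz : δ z = δ y <• (inner B (x' : E) (y' : E) : B)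
          + (y : E) <• (inner B (δ x') (y' : E) : B)
          + (y : E) <• (inner B (x' : E) (δ y') : B) := htern y x' y'
      rw [hδz]
      simp only [hz, CStarModuleOld.inner_add_right, CStarModuleOld.inner_op_smul_right]
      noncomm_ring
    | zero_left c hc =>
      intro h
      rw [dcongr _ 0 (Submodule.zero_mem _) (zero_mul c), dzero]
      simp
    | zero_right a ha =>
      intro h
      rw [dcongr _ 0 (Submodule.zero_mem _) (mul_zero a), dzero]
      simp
    | add_left a a' c ha ha' hc ih ih' =>
      intro h
      rw [dcongr _ (a * c + a' * c)
          (Submodule.add_mem _ (hmul a ha c hc) (hmul a' ha' c hc)) (add_mul a a' c),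
        dadd _ _ (hmul a ha c hc) (hmul a' ha' c hc), ih (hmul a ha c hc),
        ih' (hmul a' ha' c hc), dadd a a' ha ha']
      noncomm_ring
    | add_right a c c' ha hc hc' ih ih' =>
      intro h
      rw [dcongr _ (a * c + a * c')
          (Submodule.add_mem _ (hmul a ha c hc) (hmul a ha c' hc')) (mul_add a c c'),
        dadd _ _ (hmul a ha c hc) (hmul a ha c' hc'), ih (hmul a ha c hc),
        ih' (hmul a ha c' hc'), dadd c c' hc hc']
      noncomm_ring
    | smul_left r a c ha hc ih =>
      intro h
      rw [dcongr _ (r • (a * c)) (Submodule.smul_mem _ r (hmul a ha c hc)) (smul_mul_assoc r a c),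
        dsmul r _ (hmul a ha c hc), ih (hmul a ha c hc), dsmul r a ha]
      simp [smul_add, smul_mul_assoc, mul_smul_comm]
    | smul_right r a c ha hc ih =>
      intro h
      rw [dcongr _ (r • (a * c)) (Submodule.smul_mem _ r (hmul a ha c hc)) (mul_smul_comm r a c),
        dsmul r _ (hmul a ha c hc), ih (hmul a ha c hc), dsmul r c hc]
      simp [smul_add, smul_mul_assoc, mul_smul_comm]
  intro b b' h
  obtain ⟨b, hb⟩ := b
  obtain ⟨b', hb'⟩ := b'
  exact key b hb b' hb' h
end

section
/- Closability transfers from module derivation to algebra derivation: let E be a full Hilbert B-module and δ a densely defined d-derivation of E (δ(xb) = δ(x)b + x d(b)). If δ is closable (as an unbounded operator on the Banach space E), then d is closable (as an unbounded operator on B). -/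
open scoped RightActions
open Filter Topology

private def aux_inner_add_hom {B E : Type*}
    [NonUnitalCStarAlgebra B] [PartialOrder B] [StarOrderedRing B]
    [NormedAddCommGroup E] [NormedSpace ℂ E] [SMul Bᵐᵒᵖ E] [CStarModuleRight B E]
    (y : E) : E →+ B :=
  AddMonoidHom.mk' (fun z => (inner B y z : B)) fun _ _ => CStarModuleRight.inner_add_right

private lemma aux_inner_sub_right {B E : Type*}
    [NonUnitalCStarAlgebra B] [PartialOrder B] [StarOrderedRing B]
    [NormedAddCommGroup E] [NormedSpace ℂ E] [SMul Bᵐᵒᵖ E] [CStarModuleRight B E]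
    (y z w : E) : (inner B y (z - w) : B) = inner B y z - inner B y w :=
  map_sub (aux_inner_add_hom (B := B) y) z w

private lemma aux_inner_zero_right {B E : Type*}
    [NonUnitalCStarAlgebra B] [PartialOrder B] [StarOrderedRing B]
    [NormedAddCommGroup E] [NormedSpace ℂ E] [SMul Bᵐᵒᵖ E] [CStarModuleRight B E]
    (y : E) : (inner B y (0 : E) : B) = 0 :=
  map_zero (aux_inner_add_hom (B := B) y)

private lemma aux_inner_op_smul_left {B E : Type*}
    [NonUnitalCStarAlgebra B] [PartialOrder B] [StarOrderedRing B]
    [NormedAddCommGroup E] [NormedSpace ℂ E] [SMul Bᵐᵒᵖ E] [CStarModuleRight B E]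
    (x y : E) (a : B) : (inner B (x <• a) y : B) = star a * inner B x y := by
  rw [← CStarModuleRight.star_inner y, CStarModuleRight.inner_op_smul_right, star_mul,
    CStarModuleRight.star_inner]

private lemma aux_norm_sq_eq {B E : Type*}
    [NonUnitalCStarAlgebra B] [PartialOrder B] [StarOrderedRing B]
    [NormedAddCommGroup E] [NormedSpace ℂ E] [SMul Bᵐᵒᵖ E] [CStarModuleRight B E]
    (x : E) : ‖x‖ ^ 2 = ‖(inner B x x : B)‖ := by
  rw [CStarModuleRight.norm_eq_sqrt_norm_inner_self (A := B) x, Real.sq_sqrt (norm_nonneg _)]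

private lemma aux_inner_ext {B E : Type*}
    [NonUnitalCStarAlgebra B] [PartialOrder B] [StarOrderedRing B]
    [NormedAddCommGroup E] [NormedSpace ℂ E] [SMul Bᵐᵒᵖ E] [CStarModuleRight B E]
    {z : E} (h : ∀ y : E, (inner B y z : B) = 0) : z = 0 :=
  CStarModuleRight.inner_self.mp (h z)

private lemma aux_op_smul_sub {B E : Type*}
    [NonUnitalCStarAlgebra B] [PartialOrder B] [StarOrderedRing B]
    [NormedAddCommGroup E] [NormedSpace ℂ E] [SMul Bᵐᵒᵖ E] [CStarModuleRight B E]
    (x : E) (a a' : B) : x <• (a - a') = x <• a - x <• a' := by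
  rw [← sub_eq_zero]
  refine aux_inner_ext (B := B) fun y => ?_
  simp only [aux_inner_sub_right, CStarModuleRight.inner_op_smul_right]
  rw [mul_sub, sub_self]

private lemma aux_norm_op_smul_le {B E : Type*}
    [NonUnitalCStarAlgebra B] [PartialOrder B] [StarOrderedRing B]
    [NormedAddCommGroup E] [NormedSpace ℂ E] [SMul Bᵐᵒᵖ E] [CStarModuleRight B E]
    (x : E) (a : B) : ‖x <• a‖ ≤ ‖x‖ * ‖a‖ := by
  rw [CStarModuleRight.norm_eq_sqrt_norm_inner_self (A := B)]
  have h : (inner B (x <• a) (x <• a) : B) = star a * (inner B x x : B) * a := by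
    rw [CStarModuleRight.inner_op_smul_right, aux_inner_op_smul_left]
  rw [h]
  have hb : ‖star a * (inner B x x : B) * a‖ ≤ (‖x‖ * ‖a‖) ^ 2 := by
    calc ‖star a * (inner B x x : B) * a‖ ≤ ‖star a * (inner B x x : B)‖ * ‖a‖ := norm_mul_le _ _
      _ ≤ ‖star a‖ * ‖(inner B x x : B)‖ * ‖a‖ := by gcongr; exact norm_mul_le _ _
      _ = ‖a‖ * ‖x‖ ^ 2 * ‖a‖ := by rw [norm_star, ← aux_norm_sq_eq]
      _ = (‖x‖ * ‖a‖) ^ 2 := by ring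
  calc √‖star a * (inner B x x : B) * a‖ ≤ √((‖x‖ * ‖a‖) ^ 2) := Real.sqrt_le_sqrt hb
    _ = ‖x‖ * ‖a‖ := Real.sqrt_sq (by positivity)

/-- Closability transfers from the module derivation `δ` to the algebra derivation `d`. -/
theorem stmt12 {B E : Type*}
    [NonUnitalCStarAlgebra B] [PartialOrder B] [StarOrderedRing B]
    [NormedAddCommGroup E] [NormedSpace ℂ E] [SMul Bᵐᵒᵖ E] [CStarModuleRight B E]
    [CompleteSpace E]
    (hfull : (Submodule.span ℂ {b : B | ∃ x y : E, (inner B x y : B) = b}).topologicalClosure = ⊤)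
    (D : Submodule ℂ E) (hdense : Dense (D : Set E)) (δ : D →ₗ[ℂ] E)
    (B₀ : NonUnitalSubalgebra ℂ B) (d : B₀ →ₗ[ℂ] B)
    (hleib : ∀ (b b' : B₀) (h : (b : B) * (b' : B) ∈ B₀),
      d ⟨(b : B) * (b' : B), h⟩ = d b * (b' : B) + (b : B) * d b')
    (hmod : ∀ (x : D) (b : B₀), (x : E) <• (b : B) ∈ D)
    (hder : ∀ (x : D) (b : B₀),
      δ ⟨(x : E) <• (b : B), hmod x b⟩ = δ x <• (b : B) + (x : E) <• d b)
    (hclos : ∀ (x : ℕ → D) (e : E),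
      Tendsto (fun n => (x n : E)) atTop (𝓝 0) →
      Tendsto (fun n => δ (x n)) atTop (𝓝 e) → e = 0) :
    ∀ (b : ℕ → B₀) (c : B),
      Tendsto (fun n => (b n : B)) atTop (𝓝 0) →
      Tendsto (fun n => d (b n)) atTop (𝓝 c) → c = 0 := by
  intro b c hb hc
  -- for any fixed e, e <• b n → 0
  have hsmul0 : ∀ e : E, Tendsto (fun n => e <• (b n : B)) atTop (𝓝 0) := fun e =>
    squeeze_zero_norm (fun n => aux_norm_op_smul_le e ((b n : B)))
      (by simpa using hb.norm.const_mul ‖e‖)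
  -- Step 1: x <• c = 0 for x in D
  have step1 : ∀ x : D, (x : E) <• c = 0 := by
    intro x
    refine hclos (fun n => ⟨(x : E) <• (b n : B), hmod x (b n)⟩) _ (hsmul0 x) ?_
    have h1 : Tendsto (fun n => δ x <• (b n : B)) atTop (𝓝 0) := hsmul0 (δ x)
    have h2 : Tendsto (fun n => (x : E) <• d (b n)) atTop (𝓝 ((x : E) <• c)) := by
      rw [tendsto_iff_norm_sub_tendsto_zero]
      have hgt : Tendsto (fun n => ‖(x : E)‖ * ‖d (b n) - c‖) atTop (𝓝 0) := by
        have h0 := ((hc.sub (tendsto_const_nhds (x := c))).norm.const_mul ‖(x : E)‖)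
        simpa using h0
      refine squeeze_zero_norm (fun n => ?_) hgt
      rw [norm_norm, ← aux_op_smul_sub]
      exact aux_norm_op_smul_le _ _
    have h3 := h1.add h2
    rw [zero_add] at h3
    exact h3.congr fun n => (hder x (b n)).symm
  -- Step 2: inner y x * c = 0 for all x y : E
  have step2 : ∀ x y : E, (inner B y x : B) * c = 0 := by
    intro x y
    have hadd : ∀ z z' : E, (z + z') <• c = z <• c + z' <• c := by
      intro z z'
      rw [← sub_eq_zero]
      refine aux_inner_ext (B := B) fun w => ?_
      simp only [aux_inner_sub_right, CStarModuleRight.inner_op_smul_right,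
        CStarModuleRight.inner_add_right, add_mul, sub_self]
    have hcont : Continuous fun z : E => z <• c :=
      AddMonoidHomClass.continuous_of_bound (AddMonoidHom.mk' (fun z : E => z <• c) hadd) ‖c‖
        (fun z => by
          rw [mul_comm]
          exact aux_norm_op_smul_le z c)
    have heq : Set.EqOn (fun z : E => z <• c) (fun _ => (0 : E)) (D : Set E) := by
      intro z hz
      exact step1 ⟨z, hz⟩
    have := Continuous.ext_on hdense hcont continuous_const heq
    rw [← CStarModuleRight.inner_op_smul_right, congrFun this x, aux_inner_zero_right]
  -- Step 3: fullness gives c = 0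
  set f := (ContinuousLinearMap.mul ℂ B).flip c with hf
  have hker : Submodule.span ℂ {b : B | ∃ x y : E, (inner B x y : B) = b} ≤ f.ker := by
    rw [Submodule.span_le]
    rintro _ ⟨x, y, rfl⟩
    exact step2 y x
  have htop : (⊤ : Submodule ℂ B) ≤ f.ker := by
    rw [← hfull]
    exact Submodule.topologicalClosure_minimal _ hker (ContinuousLinearMap.isClosed_ker f)
  have hz : star c * c = 0 := htop Submodule.mem_top
  exact (CStarRing.star_mul_self_eq_zero_iff c).mp hz
end

section
/- Boundedness transfers from module derivation to algebra derivation: if E is a full Hilbert B-module, δ a d-derivation of E, and δ is bounded with norm ‖δ‖, then d is bounded with ‖d‖ ≤ 4‖δ‖. -/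
set_option linter.unusedSectionVars false
set_option linter.unusedVariables false


open scoped RightActions

namespace RightCStarModule

variable {B E : Type*}
    [NonUnitalCStarAlgebra B] [PartialOrder B] [StarOrderedRing B]
    [NormedAddCommGroup E] [NormedSpace ℂ E] [SMul Bᵐᵒᵖ E] [RightCStarModule B E]

lemma norm_sq_eq {x : E} : ‖x‖ ^ 2 = ‖inner B x x‖ := by
  rw [RightCStarModule.norm_eq_sqrt_norm_inner_self (A := B) x, Real.sq_sqrt (norm_nonneg _)]

end RightCStarModule

section Aux

variable {B E : Type*}
    [NonUnitalCStarAlgebra B] [PartialOrder B] [StarOrderedRing B]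
    [NormedAddCommGroup E] [NormedSpace ℂ E] [SMul Bᵐᵒᵖ E] [RightCStarModule B E]

lemma my_ext_inner {w₁ w₂ : E} (h : ∀ z : E, (inner B (z) (w₁)) = (inner B (z) (w₂))) : w₁ = w₂ := by
  have h0 : (inner B (w₁ - w₂) (w₁ - w₂)) = 0 := by
    rw [RightCStarModule.inner_sub_right, h (w₁ - w₂), sub_self]
  exact sub_eq_zero.mp (RightCStarModule.inner_self.mp h0)

lemma my_smul_assoc (x : E) (u v : B) : x <• (u * v) = (x <• u) <• v :=
  my_ext_inner fun z => by
    rw [RightCStarModule.inner_op_smul_right, RightCStarModule.inner_op_smul_right,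
      RightCStarModule.inner_op_smul_right, mul_assoc]

lemma my_smul_real (x : E) (r : ℝ) (u : B) : x <• (r • u) = r • (x <• u) :=
  my_ext_inner fun z => by
    rw [RightCStarModule.inner_op_smul_right, RightCStarModule.inner_smul_right_real,
      RightCStarModule.inner_op_smul_right, mul_smul_comm]

lemma my_smul_sub (x y : E) (u : B) : (x - y) <• u = x <• u - y <• u :=
  my_ext_inner fun z => by
    rw [RightCStarModule.inner_op_smul_right, RightCStarModule.inner_sub_right, sub_mul,
      RightCStarModule.inner_sub_right, RightCStarModule.inner_op_smul_right,
      RightCStarModule.inner_op_smul_right]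

lemma my_norm_smul_le (x : E) (u : B) : ‖x <• u‖ ≤ ‖x‖ * ‖u‖ := by
  have h1 : (inner B (x <• u) (x <• u)) = star u * (inner B (x) (x)) * u := by
    simp [mul_assoc, RightCStarModule.inner_op_smul_left, RightCStarModule.inner_op_smul_right]
  have h2 : ‖(inner B (x <• u) (x <• u))‖ ≤ (‖x‖ * ‖u‖) ^ 2 := by
    rw [h1]
    calc ‖star u * (inner B (x) (x)) * u‖ ≤ ‖star u * (inner B (x) (x))‖ * ‖u‖ := norm_mul_le _ _
      _ ≤ ‖star u‖ * ‖(inner B (x) (x))‖ * ‖u‖ := by gcongr; exact norm_mul_le _ _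
      _ = ‖(inner B (x) (x))‖ * (‖u‖ * ‖u‖) := by rw [norm_star]; ring
      _ ≤ ‖x‖ ^ 2 * (‖u‖ * ‖u‖) := by
          gcongr
          rw [← RightCStarModule.norm_sq_eq (B := B) (x := x)]
      _ = (‖x‖ * ‖u‖) ^ 2 := by ring
  calc ‖x <• u‖ = Real.sqrt ‖(inner B (x <• u) (x <• u))‖ :=
        RightCStarModule.norm_eq_sqrt_norm_inner_self _
    _ ≤ Real.sqrt ((‖x‖ * ‖u‖) ^ 2) := Real.sqrt_le_sqrt h2
    _ = ‖x‖ * ‖u‖ := Real.sqrt_sq (by positivity)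

lemma my_faithful
    (hfull : (Submodule.span ℂ {b : B | ∃ x y : E, (inner B x y : B) = b}).topologicalClosure = ⊤)
    (q : B) (h : ∀ x : E, x <• q = 0) : q = 0 := by
  set T : B →L[ℂ] B := (ContinuousLinearMap.mul ℂ B).flip q with hT
  have hle : (Submodule.span ℂ {b : B | ∃ x y : E, (inner B x y : B) = b}) ≤ LinearMap.ker (T : B →ₗ[ℂ] B) := by
    rw [Submodule.span_le]
    rintro - ⟨x, y, rfl⟩
    have : ((inner B (x) (y)) : B) * q = (inner B (x) (y <• q)) := by
      rw [RightCStarModule.inner_op_smul_right]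
    simp only [SetLike.mem_coe, LinearMap.mem_ker]
    show ((inner B (x) (y)) : B) * q = 0
    rw [this, h y, RightCStarModule.inner_zero_right]
  have hle2 : (Submodule.span ℂ {b : B | ∃ x y : E, (inner B x y : B) = b}).topologicalClosure
      ≤ LinearMap.ker (T : B →ₗ[ℂ] B) := by
    apply Submodule.topologicalClosure_minimal _ hle
    exact ContinuousLinearMap.isClosed_ker T
  rw [hfull] at hle2
  have hq : star q * q = 0 := hle2 (Submodule.mem_top (R := ℂ) (M := B) (x := star q))
  exact CStarRing.star_mul_self_eq_zero_iff q |>.mp hq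

end Aux

section Key

variable {B E : Type*}
    [NonUnitalCStarAlgebra B] [PartialOrder B] [StarOrderedRing B]
    [NormedAddCommGroup E] [NormedSpace ℂ E] [SMul Bᵐᵒᵖ E] [RightCStarModule B E]

lemma my_key
    (hfull : (Submodule.span ℂ {b : B | ∃ x y : E, (inner B x y : B) = b}).topologicalClosure = ⊤)
    (a : B) (ha : 0 ≤ a) (ν : ℝ) (hν : 0 ≤ ν)
    (h : ∀ x : E, ‖x <• a‖ ≤ ν * ‖x‖) : ‖a‖ ≤ ν := by
  by_contra hc
  push_neg at hc
  set θ : ℝ := (ν + ‖a‖) / 2 with hθdef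
  have hθν : ν < θ := by rw [hθdef]; linarith
  have hθa : θ < ‖a‖ := by rw [hθdef]; linarith
  have hθ0 : 0 < θ := lt_of_le_of_lt hν hθν
  have hasa : IsSelfAdjoint a := IsSelfAdjoint.of_nonneg ha
  set f : ℝ → ℝ := fun t => max (t - θ) 0 with hfdef
  have hfc : Continuous f := by fun_prop
  have hf0 : f 0 = 0 := by
    simp only [hfdef, max_eq_right_iff]
    linarith
  set b : B := cfcₙ f a with hbdef
  -- b ≠ 0
  have hspec : ‖a‖ ∈ quasispectrum ℝ a := by
    rw [Unitization.quasispectrum_eq_spectrum_inr' ℝ ℂ a]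
    have hnn : (0 : Unitization ℂ B) ≤ (a : Unitization ℂ B) := Unitization.inr_nonneg_iff.mpr ha
    have := CStarAlgebra.norm_mem_spectrum_of_nonneg hnn
    rwa [Unitization.norm_inr] at this
  have hlow : f ‖a‖ ≤ ‖b‖ := by
    have := norm_apply_le_norm_cfcₙ f a hspec hfc.continuousOn hf0 hasa
    rwa [Real.norm_eq_abs, abs_of_nonneg (le_max_right _ _)] at this
  have hbne : b ≠ 0 := by
    intro h0
    rw [h0, norm_zero] at hlow
    have hfa : 0 < f ‖a‖ := by
      simp only [hfdef, lt_max_iff]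
      left; linarith
    linarith
  -- bound on powers
  have hPow : ∀ m : ℕ, ∀ y : E, ‖y <• cfcₙ (fun t : ℝ => t ^ (m + 1)) a‖ ≤ ν ^ (m + 1) * ‖y‖ := by
    intro m
    induction m with
    | zero =>
      intro y
      have h1 : (fun t : ℝ => t ^ (0 + 1)) = id := funext fun t => pow_one t
      rw [h1, cfcₙ_id ℝ a, pow_one]
      exact h y
    | succ m ih =>
      intro y
      have h1 : (fun t : ℝ => t ^ (m + 1 + 1)) = fun t : ℝ => t ^ (m + 1) * t :=
        funext fun t => pow_succ t (m + 1)
      have h2 : cfcₙ (fun t : ℝ => t ^ (m + 1) * t) a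
          = cfcₙ (fun t : ℝ => t ^ (m + 1)) a * cfcₙ (fun t : ℝ => t) a :=
        cfcₙ_mul _ _ a
      rw [h1, h2, cfcₙ_id' ℝ a, my_smul_assoc]
      calc ‖(y <• cfcₙ (fun t : ℝ => t ^ (m + 1)) a) <• a‖
          ≤ ν * ‖y <• cfcₙ (fun t : ℝ => t ^ (m + 1)) a‖ := h _
        _ ≤ ν * (ν ^ (m + 1) * ‖y‖) := by gcongr; exact ih y
        _ = ν ^ (m + 1 + 1) * ‖y‖ := by ring
  -- the decay estimate
  have hdecay : ∀ x : E, ∀ m : ℕ, ‖x <• b‖ ≤ (ν / θ) ^ (m + 1) * (‖b‖ * ‖x‖) := by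
    intro x m
    set g : ℝ → ℝ := fun t => f t * (θ / max t θ) ^ (m + 1) with hgdef
    have hgc : Continuous g := by
      apply hfc.mul
      apply Continuous.pow
      apply continuous_const.div (continuous_id.max continuous_const)
      intro t
      exact ne_of_gt (lt_of_lt_of_le hθ0 (le_max_right t θ))
    have hg0 : g 0 = 0 := by simp [hgdef, hf0]
    -- the function identity
    have hfun : (fun t : ℝ => g t * t ^ (m + 1)) = fun t : ℝ => θ ^ (m + 1) • f t := by
      funext t
      rcases le_or_gt t θ with ht | ht
      · have hft : f t = 0 := by
          simp only [hfdef, max_eq_right_iff]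
          linarith
        simp [hgdef, hft]
      · have hmax : max t θ = t := max_eq_left ht.le
        have htpos : (0 : ℝ) < t := lt_trans hθ0 ht
        simp only [hgdef, hmax, smul_eq_mul, div_pow]
        field_simp
    have hkey : θ ^ (m + 1) • b = cfcₙ g a * cfcₙ (fun t : ℝ => t ^ (m + 1)) a := by
      rw [← cfcₙ_mul _ _ a hgc.continuousOn hg0 (by fun_prop) (by simp), hfun,
        cfcₙ_smul (θ ^ (m + 1)) f a hfc.continuousOn hf0]
    -- norm of cfcₙ g a
    have hgnorm : ‖cfcₙ g a‖ ≤ ‖b‖ := by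
      apply norm_cfcₙ_le
      intro t ht
      have h1 : ‖f t‖ ≤ ‖b‖ := norm_apply_le_norm_cfcₙ f a ht hfc.continuousOn hf0 hasa
      have h2 : ‖g t‖ ≤ ‖f t‖ := by
        rw [hgdef]
        simp only [Real.norm_eq_abs, abs_mul]
        have hratio : (θ / max t θ) ^ (m + 1) ≤ 1 := by
          apply pow_le_one₀
          · positivity
          · apply div_le_one_of_le₀ (le_max_right t θ) (by positivity)
        have hratio0 : (0:ℝ) ≤ (θ / max t θ) ^ (m + 1) := by positivity
        calc |f t| * |(θ / max t θ) ^ (m + 1)| = |f t| * (θ / max t θ) ^ (m + 1) := by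
              rw [abs_of_nonneg hratio0]
          _ ≤ |f t| * 1 := by gcongr
          _ = |f t| := mul_one _
      exact h2.trans h1
    have hθpow : (0:ℝ) < θ ^ (m + 1) := by positivity
    have hchain : θ ^ (m + 1) * ‖x <• b‖ ≤ ν ^ (m + 1) * (‖b‖ * ‖x‖) := by
      calc θ ^ (m + 1) * ‖x <• b‖ = ‖θ ^ (m + 1) • (x <• b)‖ := by
            rw [norm_smul (θ ^ (m + 1)) (x <• b), Real.norm_eq_abs, abs_of_pos hθpow]
        _ = ‖x <• (θ ^ (m + 1) • b)‖ := by rw [my_smul_real]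
        _ = ‖x <• (cfcₙ g a * cfcₙ (fun t : ℝ => t ^ (m + 1)) a)‖ := by rw [hkey]
        _ = ‖(x <• cfcₙ g a) <• cfcₙ (fun t : ℝ => t ^ (m + 1)) a‖ := by rw [my_smul_assoc]
        _ ≤ ν ^ (m + 1) * ‖x <• cfcₙ g a‖ := hPow m _
        _ ≤ ν ^ (m + 1) * (‖x‖ * ‖cfcₙ g a‖) := by gcongr; exact my_norm_smul_le _ _
        _ ≤ ν ^ (m + 1) * (‖x‖ * ‖b‖) := by gcongr
        _ = ν ^ (m + 1) * (‖b‖ * ‖x‖) := by ring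
    rw [div_pow, div_mul_eq_mul_div, le_div_iff₀ hθpow]
    calc ‖x <• b‖ * θ ^ (m + 1) = θ ^ (m + 1) * ‖x <• b‖ := by ring
      _ ≤ ν ^ (m + 1) * (‖b‖ * ‖x‖) := hchain
  -- conclude x <• b = 0 for all x
  have hzero : ∀ x : E, x <• b = 0 := by
    intro x
    have htend : Filter.Tendsto (fun m : ℕ => (ν / θ) ^ (m + 1) * (‖b‖ * ‖x‖))
        Filter.atTop (nhds 0) := by
      have hr : |ν / θ| < 1 := by
        rw [abs_of_nonneg (by positivity)]
        rw [div_lt_one hθ0]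
        exact hθν
      have := tendsto_pow_atTop_nhds_zero_of_abs_lt_one hr
      have h2 := (this.comp (Filter.tendsto_add_atTop_nat 1)).mul_const (‖b‖ * ‖x‖)
      simpa using h2
    have hle : ‖x <• b‖ ≤ 0 := le_of_tendsto_of_tendsto' tendsto_const_nhds htend
      (fun m => hdecay x m)
    simpa using norm_le_zero_iff.mp hle
  exact hbne (my_faithful hfull b hzero)

end Key

section Density

variable {B E : Type*}
    [NonUnitalCStarAlgebra B] [PartialOrder B] [StarOrderedRing B]
    [NormedAddCommGroup E] [NormedSpace ℂ E] [SMul Bᵐᵒᵖ E] [RightCStarModule B E]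

lemma my_dense_ext (D : Submodule ℂ E) (hdense : Dense (D : Set E)) (c : B) (K : ℝ)
    (hK : 0 ≤ K) (hD : ∀ x ∈ D, ‖x <• c‖ ≤ K * ‖x‖) :
    ∀ x : E, ‖x <• c‖ ≤ K * ‖x‖ := by
  intro x
  apply le_of_forall_pos_le_add
  intro ε hε
  have hη : 0 < ε / (‖c‖ + K + 1) := by positivity
  obtain ⟨y, hyD, hy⟩ := Metric.mem_closure_iff.mp (hdense x) _ hη
  rw [dist_eq_norm] at hy
  have h1 : ‖x <• c‖ ≤ ‖(x - y) <• c‖ + ‖y <• c‖ := by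
    have heq : (x - y) <• c + y <• c = x <• c := by rw [my_smul_sub]; abel
    rw [← heq]; exact norm_add_le _ _
  have h2 : ‖(x - y) <• c‖ ≤ ‖x - y‖ * ‖c‖ := my_norm_smul_le _ _
  have h3 : ‖y <• c‖ ≤ K * ‖y‖ := hD y hyD
  have h4 : ‖y‖ ≤ ‖x‖ + ‖x - y‖ := by
    calc ‖y‖ = ‖x - (x - y)‖ := by congr 1; abel
      _ ≤ ‖x‖ + ‖x - y‖ := norm_sub_le _ _
  have h5 : ‖x - y‖ ≤ ε / (‖c‖ + K + 1) := hy.le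
  calc ‖x <• c‖ ≤ ‖x - y‖ * ‖c‖ + K * (‖x‖ + ‖x - y‖) := by
        refine h1.trans (add_le_add h2 (h3.trans ?_))
        exact mul_le_mul_of_nonneg_left h4 hK
    _ = K * ‖x‖ + ‖x - y‖ * (‖c‖ + K) := by ring
    _ ≤ K * ‖x‖ + (ε / (‖c‖ + K + 1)) * (‖c‖ + K + 1) := by
        have h6 : ‖x - y‖ * (‖c‖ + K) ≤ (ε / (‖c‖ + K + 1)) * (‖c‖ + K + 1) := by
          apply mul_le_mul h5 (by linarith) (by positivity) hη.le
        linarith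
    _ ≤ K * ‖x‖ + ε := by
        rw [div_mul_cancel₀]
        positivity
end Density

/-- Boundedness transfers from the module derivation `δ` to the algebra derivation `d`,
with `‖d‖ ≤ 4 ‖δ‖`. -/
theorem stmt13 {B E : Type*}
    [NonUnitalCStarAlgebra B] [PartialOrder B] [StarOrderedRing B]
    [NormedAddCommGroup E] [NormedSpace ℂ E] [SMul Bᵐᵒᵖ E] [RightCStarModule B E]
    [CompleteSpace E]
    (hfull : (Submodule.span ℂ {b : B | ∃ x y : E, (inner B x y : B) = b}).topologicalClosure = ⊤)
    (D : Submodule ℂ E) (hdense : Dense (D : Set E)) (δ : D →ₗ[ℂ] E)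
    (B₀ : NonUnitalSubalgebra ℂ B) (d : B₀ →ₗ[ℂ] B)
    (hleib : ∀ (b b' : B₀) (h : (b : B) * (b' : B) ∈ B₀),
      d ⟨(b : B) * (b' : B), h⟩ = d b * (b' : B) + (b : B) * d b')
    (hmod : ∀ (x : D) (b : B₀), (x : E) <• (b : B) ∈ D)
    (hder : ∀ (x : D) (b : B₀),
      δ ⟨(x : E) <• (b : B), hmod x b⟩ = δ x <• (b : B) + (x : E) <• d b)
    (M : ℝ) (hM : 0 ≤ M) (hbound : ∀ x : D, ‖δ x‖ ≤ M * ‖(x : E)‖) :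
    ∀ b : B₀, ‖d b‖ ≤ 4 * M * ‖(b : B)‖ := by
  intro b
  set c : B := d b with hcdef
  set K : ℝ := 2 * M * ‖(b : B)‖ with hKdef
  have hK0 : 0 ≤ K := by positivity
  have hDbound : ∀ x ∈ D, ‖x <• c‖ ≤ K * ‖x‖ := by
    intro x hx
    have h1 := hder ⟨x, hx⟩ b
    have h2 : x <• c = δ ⟨x <• (b : B), hmod ⟨x, hx⟩ b⟩ - δ ⟨x, hx⟩ <• (b : B) := by
      rw [h1]
      abel
    have h3 : ‖δ ⟨x <• (b : B), hmod ⟨x, hx⟩ b⟩‖ ≤ M * (‖x‖ * ‖(b : B)‖) := by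
      refine (hbound _).trans ?_
      gcongr
      exact my_norm_smul_le x (b : B)
    have h4 : ‖δ ⟨x, hx⟩ <• (b : B)‖ ≤ M * ‖x‖ * ‖(b : B)‖ := by
      refine (my_norm_smul_le _ _).trans ?_
      gcongr
      exact hbound ⟨x, hx⟩
    calc ‖x <• c‖ ≤ ‖δ ⟨x <• (b : B), hmod ⟨x, hx⟩ b⟩‖ + ‖δ ⟨x, hx⟩ <• (b : B)‖ := by
          rw [h2]; exact norm_sub_le _ _
      _ ≤ M * (‖x‖ * ‖(b : B)‖) + M * ‖x‖ * ‖(b : B)‖ := add_le_add h3 h4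
      _ = K * ‖x‖ := by rw [hKdef]; ring
  have hE : ∀ x : E, ‖x <• c‖ ≤ K * ‖x‖ := my_dense_ext D hdense c K hK0 hDbound
  have ha : (0 : B) ≤ star c * c := star_mul_self_nonneg c
  have hBa : ∀ x : E, ‖x <• (star c * c)‖ ≤ K * ‖c‖ * ‖x‖ := by
    intro x
    rw [my_smul_assoc]
    calc ‖(x <• star c) <• c‖ ≤ K * ‖x <• star c‖ := hE _
      _ ≤ K * (‖x‖ * ‖star c‖) := by gcongr; exact my_norm_smul_le _ _
      _ = K * ‖c‖ * ‖x‖ := by rw [norm_star]; ring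
  have hnorm : ‖star c * c‖ ≤ K * ‖c‖ :=
    my_key hfull _ ha _ (by positivity) hBa
  rw [CStarRing.norm_star_mul_self] at hnorm
  have hc : ‖c‖ ≤ K := by
    rcases eq_or_lt_of_le (norm_nonneg c) with h0 | h0
    · rw [← h0]; exact hK0
    · exact le_of_mul_le_mul_right (by linarith) h0
  calc ‖d b‖ = ‖c‖ := by rw [hcdef]
    _ ≤ K := hc
    _ ≤ 4 * M * ‖(b : B)‖ := by rw [hKdef]; nlinarith [norm_nonneg (b : B)]
end

section
/- If u = (u_t) is a strongly continuous one-parameter group of ternary automorphisms of a Hilbert B-module E with generator δ, then for all x, y, z ∈ dom(δ), the element x⟨y,z⟩ lies in dom(δ) and δ(x⟨y,z⟩) = δ(x)⟨y,z⟩ + x⟨δ(y),z⟩ + x⟨y,δ(z)⟩; i.e., δ is a ternary derivation. -/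
open scoped RightActions
open Filter Topology

namespace CStarModuleRight

variable {B E : Type*}
    [NonUnitalCStarAlgebra B] [PartialOrder B] [StarOrderedRing B]
    [NormedAddCommGroup E] [NormedSpace ℂ E] [SMul Bᵐᵒᵖ E] [CStarModuleRight B E]

lemma inner_sub_right {x y z : E} : inner B x (y - z) = inner B x y - inner B x z :=
  (AddMonoidHom.mk' (fun y : E => inner B x y)
    (fun _ _ => CStarModuleRight.inner_add_right)).map_sub y z

lemma inner_add_left {x y z : E} : inner B (x + y) z = inner B x z + inner B y z := by
  rw [← CStarModuleRight.star_inner z, CStarModuleRight.inner_add_right, star_add,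
    CStarModuleRight.star_inner, CStarModuleRight.star_inner]

lemma inner_sub_left {x y z : E} : inner B (x - y) z = inner B x z - inner B y z :=
  (AddMonoidHom.mk' (fun x : E => inner B x z)
    (fun _ _ => CStarModuleRight.inner_add_left)).map_sub x y

lemma inner_smul_right_real {r : ℝ} {x y : E} : inner B x (r • y) = r • inner B x y := by
  have h₁ : r • y = (r : ℂ) • y := by simp
  have h₂ : r • inner B x y = (r : ℂ) • inner B x y := by simp
  rw [h₁, h₂, CStarModuleRight.inner_smul_right_complex]

lemma inner_smul_left_real {r : ℝ} {x y : E} : inner B (r • x) y = r • inner B x y := by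
  rw [← CStarModuleRight.star_inner y, CStarModuleRight.inner_smul_right_real, star_smul,
    star_trivial, CStarModuleRight.star_inner]

lemma inner_op_smul_left {a : B} {x y : E} : inner B (x <• a) y = star a * inner B x y := by
  rw [← CStarModuleRight.star_inner y, CStarModuleRight.inner_op_smul_right, star_mul,
    CStarModuleRight.star_inner]

variable (B) in
lemma norm_sq_eq {x : E} : ‖x‖ ^ 2 = ‖inner B x x‖ := by
  rw [CStarModuleRight.norm_eq_sqrt_norm_inner_self (A := B) x, Real.sq_sqrt (norm_nonneg _)]

lemma inner_mul_inner_swap_le {x y : E} :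
    inner B y x * inner B x y ≤ ‖x‖ ^ 2 • inner B y y := by
  rcases eq_or_ne x 0 with h | h
  · have h0 : inner B y (0 : E) = 0 := by
      rw [← sub_self (0 : E), CStarModuleRight.inner_sub_right, sub_self]
    rw [h, h0, zero_mul]
    simp
  · have hx : 0 < ‖x‖ := norm_pos_iff.mpr h
    have hsa : IsSelfAdjoint (inner B x x) := CStarModuleRight.star_inner x x
    have h₁ : ∀ (a : B),
        (0 : B) ≤ ‖x‖ ^ 2 • (star a * a) - ‖x‖ ^ 2 • (star a * inner B x y)
                  - ‖x‖ ^ 2 • (inner B y x * a) + ‖x‖ ^ 2 • (‖x‖ ^ 2 • inner B y y) :=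
      fun a => by
       calc (0 : B) ≤ inner B (x <• a - ‖x‖ ^ 2 • y) (x <• a - ‖x‖ ^ 2 • y) :=
                      CStarModuleRight.inner_self_nonneg
            _ = star a * inner B x x * a - ‖x‖ ^ 2 • (star a * inner B x y)
                  - ‖x‖ ^ 2 • (inner B y x * a) + ‖x‖ ^ 2 • (‖x‖ ^ 2 • inner B y y) := by
                      simp only [CStarModuleRight.inner_sub_right,
                        CStarModuleRight.inner_op_smul_right, CStarModuleRight.inner_sub_left,
                        CStarModuleRight.inner_op_smul_left,
                        CStarModuleRight.inner_smul_left_real, mul_sub, sub_mul,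
                        smul_mul_assoc, mul_smul_comm,
                        CStarModuleRight.inner_smul_right_real, smul_sub, mul_assoc]
                      abel
            _ ≤ ‖x‖ ^ 2 • (star a * a) - ‖x‖ ^ 2 • (star a * inner B x y)
                  - ‖x‖ ^ 2 • (inner B y x * a) + ‖x‖ ^ 2 • (‖x‖ ^ 2 • inner B y y) := by
                      gcongr
                      calc _ ≤ ‖inner B x x‖ • (star a * a) :=
                          CStarAlgebra.star_left_conjugate_le_norm_smul hsa
                        _ = ‖x‖ ^ 2 • (star a * a) := by
                          rw [CStarModuleRight.norm_sq_eq B]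
    specialize h₁ (inner B x y)
    simp only [CStarModuleRight.star_inner, sub_self, zero_sub, le_neg_add_iff_add_le,
      add_zero] at h₁
    rwa [smul_le_smul_iff_of_pos_left (pow_pos hx _)] at h₁

lemma norm_inner_le {x y : E} : ‖inner B x y‖ ≤ ‖x‖ * ‖y‖ := by
  have := calc ‖inner B x y‖ ^ 2 = ‖inner B y x * inner B x y‖ := by
                rw [← CStarModuleRight.star_inner x, CStarRing.norm_star_mul_self, pow_two]
    _ ≤ ‖‖x‖ ^ 2 • inner B y y‖ := by
                refine CStarAlgebra.norm_le_norm_of_nonneg_of_le ?_ inner_mul_inner_swap_le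
                rw [← CStarModuleRight.star_inner x]
                exact star_mul_self_nonneg _
    _ = ‖x‖ ^ 2 * ‖inner B y y‖ := by simp [norm_smul]
    _ = ‖x‖ ^ 2 * ‖y‖ ^ 2 := by rw [CStarModuleRight.norm_sq_eq B (x := y)]
    _ = (‖x‖ * ‖y‖) ^ 2 := by simp only [mul_pow]
  refine (pow_le_pow_iff_left₀ (norm_nonneg _) ?_ (by simp)).mp this
  positivity

/-- The inner product as a continuous real-bilinear map. -/
noncomputable def innerRL : E →L[ℝ] E →L[ℝ] B :=
  LinearMap.mkContinuous₂
    (LinearMap.mk₂ ℝ (fun (x y : E) => inner B x y)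
      (fun _ _ _ => CStarModuleRight.inner_add_left)
      (fun _ _ _ => CStarModuleRight.inner_smul_left_real)
      (fun _ _ _ => CStarModuleRight.inner_add_right)
      (fun _ _ _ => CStarModuleRight.inner_smul_right_real))
    1 (fun x y => by simpa using CStarModuleRight.norm_inner_le (x := x) (y := y))

lemma continuous_inner : Continuous (fun p : E × E => inner B p.1 p.2) :=
  (innerRL (B := B) (E := E)).continuous₂

end CStarModuleRight

section Aux

variable {B E : Type*}
    [NonUnitalCStarAlgebra B] [PartialOrder B] [StarOrderedRing B]
    [NormedAddCommGroup E] [NormedSpace ℂ E] [SMul Bᵐᵒᵖ E] [CStarModuleRight B E]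

open CStarModuleRight

lemma aux_ext {a b : E} (h : ∀ w : E, (inner B w a : B) = inner B w b) : a = b := by
  have h2 : (inner B (a - b) (a - b) : B) = 0 := by
    rw [CStarModuleRight.inner_sub_right, h (a - b), sub_self]
  exact sub_eq_zero.mp (CStarModuleRight.inner_self.mp h2)

lemma aux_add_left (v v' : E) (b : B) : (v + v') <• b = v <• b + v' <• b := by
  refine aux_ext (B := B) fun w => ?_
  simp [inner_op_smul_right, CStarModuleRight.inner_add_right, add_mul]

lemma aux_smul_left (c : ℝ) (v : E) (b : B) : (c • v) <• b = c • (v <• b) := by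
  refine aux_ext (B := B) fun w => ?_
  rw [CStarModuleRight.inner_op_smul_right, CStarModuleRight.inner_smul_right_real,
    CStarModuleRight.inner_smul_right_real, CStarModuleRight.inner_op_smul_right, smul_mul_assoc]

lemma aux_smul_right (c : ℝ) (v : E) (b : B) : v <• (c • b) = c • (v <• b) := by
  refine aux_ext (B := B) fun w => ?_
  rw [CStarModuleRight.inner_op_smul_right, CStarModuleRight.inner_smul_right_real,
    CStarModuleRight.inner_op_smul_right, mul_smul_comm]

lemma aux_sub_left (v v' : E) (b : B) : (v - v') <• b = v <• b - v' <• b := by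
  refine aux_ext (B := B) fun w => ?_
  simp [inner_op_smul_right, CStarModuleRight.inner_sub_right, sub_mul]

lemma aux_sub_right (v : E) (b b' : B) : v <• (b - b') = v <• b - v <• b' := by
  refine aux_ext (B := B) fun w => ?_
  rw [CStarModuleRight.inner_op_smul_right, CStarModuleRight.inner_sub_right,
    CStarModuleRight.inner_op_smul_right, CStarModuleRight.inner_op_smul_right, mul_sub]

lemma aux_norm (v : E) (b : B) : ‖v <• b‖ ≤ ‖v‖ * ‖b‖ := by
  have h1 : (inner B (v <• b) (v <• b) : B) = star b * ((inner B v v : B) * b) := by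
    rw [inner_op_smul_right, inner_op_smul_left, mul_assoc]
  have h2 : ‖(inner B (v <• b) (v <• b) : B)‖ ≤ (‖v‖ * ‖b‖) ^ 2 := by
    rw [h1]
    calc ‖star b * ((inner B v v : B) * b)‖ ≤ ‖star b‖ * (‖(inner B v v : B)‖ * ‖b‖) :=
          (norm_mul_le _ _).trans (by gcongr; exact norm_mul_le _ _)
      _ = ‖b‖ * (‖v‖ ^ 2 * ‖b‖) := by rw [norm_star, CStarModuleRight.norm_sq_eq B]
      _ = (‖v‖ * ‖b‖) ^ 2 := by ring
  calc ‖v <• b‖ = Real.sqrt ‖(inner B (v <• b) (v <• b) : B)‖ :=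
        CStarModuleRight.norm_eq_sqrt_norm_inner_self _
    _ ≤ Real.sqrt ((‖v‖ * ‖b‖) ^ 2) := Real.sqrt_le_sqrt h2
    _ = ‖v‖ * ‖b‖ := Real.sqrt_sq (by positivity)

/-- The right action as a continuous bilinear map. -/
noncomputable def opSmulL : E →L[ℝ] B →L[ℝ] E :=
  LinearMap.mkContinuous₂
    (LinearMap.mk₂ ℝ (fun (v : E) (b : B) => v <• b)
      aux_add_left aux_smul_left
      (fun v b b' => by
        refine aux_ext (B := B) fun w => ?_
        rw [CStarModuleRight.inner_op_smul_right, CStarModuleRight.inner_add_right,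
          CStarModuleRight.inner_op_smul_right, CStarModuleRight.inner_op_smul_right, mul_add])
      aux_smul_right)
    1 (fun v b => by simpa using aux_norm v b)

lemma continuous_opSmul : Continuous (fun p : E × B => p.1 <• p.2) :=
  (opSmulL (B := B) (E := E)).continuous₂

end Aux

/-- The generator of a strongly continuous one-parameter group of ternary automorphisms
of a Hilbert C*-module is a ternary derivation. -/
theorem stmt16 {B E : Type*}
    [NonUnitalCStarAlgebra B] [PartialOrder B] [StarOrderedRing B]
    [NormedAddCommGroup E] [NormedSpace ℂ E] [SMul Bᵐᵒᵖ E] [CStarModuleRight B E]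
    [CompleteSpace E]
    (u : ℝ → E → E)
    (hu0 : u 0 = id)
    (hgrp : ∀ s t : ℝ, ∀ x : E, u (s + t) x = u s (u t x))
    (hbij : ∀ t : ℝ, Function.Bijective (u t))
    (htern : ∀ (t : ℝ) (x y z : E),
      u t (x <• (inner B y z : B)) = (u t x) <• (inner B (u t y) (u t z) : B))
    (hcont : ∀ x : E, Continuous fun t : ℝ => u t x)
    (D : Set E) (δ : E → E)
    (hD : ∀ x : E, x ∈ D ↔ ∃ l : E,
      Tendsto (fun t : ℝ => t⁻¹ • (u t x - x)) (𝓝[≠] 0) (𝓝 l))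
    (hδ : ∀ x ∈ D,
      Tendsto (fun t : ℝ => t⁻¹ • (u t x - x)) (𝓝[≠] 0) (𝓝 (δ x))) :
    ∀ x ∈ D, ∀ y ∈ D, ∀ z ∈ D,
      x <• (inner B y z : B) ∈ D ∧
      δ (x <• (inner B y z : B)) =
        δ x <• (inner B y z : B) + x <• (inner B (δ y) z : B) + x <• (inner B y (δ z) : B) := by
  intro x hx y hy z hz
  set w : E := x <• (inner B y z : B) with hw
  set L : E := δ x <• (inner B y z : B) + x <• (inner B (δ y) z : B) + x <• (inner B y (δ z) : B)
    with hL
  -- convergence of u t v to v as t → 0 within punctured nbhd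
  have hU : ∀ v : E, Tendsto (fun t : ℝ => u t v) (𝓝[≠] 0) (𝓝 v) := by
    intro v
    have := ((hcont v).tendsto 0).mono_left (nhdsWithin_le_nhds (s := {(0:ℝ)}ᶜ))
    simpa [hu0] using this
  -- the difference quotient identity
  have key : ∀ t : ℝ, t⁻¹ • (u t w - w) =
      (t⁻¹ • (u t x - x)) <• (inner B (u t y) (u t z) : B)
      + x <• (inner B (t⁻¹ • (u t y - y)) (u t z) : B)
      + x <• (inner B y (t⁻¹ • (u t z - z)) : B) := by
    intro t
    rw [CStarModuleRight.inner_smul_left_real, CStarModuleRight.inner_smul_right_real,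
      aux_smul_left, aux_smul_right, aux_smul_right, ← smul_add, ← smul_add]
    congr 1
    rw [aux_sub_left, CStarModuleRight.inner_sub_left, CStarModuleRight.inner_sub_right,
      aux_sub_right, aux_sub_right, hw, htern]
    abel
  -- limits of the three terms
  have t1 : Tendsto (fun t : ℝ => (t⁻¹ • (u t x - x)) <• (inner B (u t y) (u t z) : B))
      (𝓝[≠] 0) (𝓝 (δ x <• (inner B y z : B))) := by
    have hi : Tendsto (fun t : ℝ => (inner B (u t y) (u t z) : B)) (𝓝[≠] 0)
        (𝓝 (inner B y z : B)) :=
      (CStarModuleRight.continuous_inner.tendsto (y, z)).comp ((hU y).prodMk_nhds (hU z))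
    exact (continuous_opSmul.tendsto (δ x, (inner B y z : B))).comp
      ((hδ x hx).prodMk_nhds hi)
  have t2 : Tendsto (fun t : ℝ => x <• (inner B (t⁻¹ • (u t y - y)) (u t z) : B))
      (𝓝[≠] 0) (𝓝 (x <• (inner B (δ y) z : B))) := by
    have hi : Tendsto (fun t : ℝ => (inner B (t⁻¹ • (u t y - y)) (u t z) : B)) (𝓝[≠] 0)
        (𝓝 (inner B (δ y) z : B)) :=
      (CStarModuleRight.continuous_inner.tendsto (δ y, z)).comp ((hδ y hy).prodMk_nhds (hU z))
    exact (continuous_opSmul.tendsto (x, (inner B (δ y) z : B))).comp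
      (tendsto_const_nhds.prodMk_nhds hi)
  have t3 : Tendsto (fun t : ℝ => x <• (inner B y (t⁻¹ • (u t z - z)) : B))
      (𝓝[≠] 0) (𝓝 (x <• (inner B y (δ z) : B))) := by
    have hi : Tendsto (fun t : ℝ => (inner B y (t⁻¹ • (u t z - z)) : B)) (𝓝[≠] 0)
        (𝓝 (inner B y (δ z) : B)) :=
      (CStarModuleRight.continuous_inner.tendsto (y, δ z)).comp
        (tendsto_const_nhds.prodMk_nhds (hδ z hz))
    exact (continuous_opSmul.tendsto (x, (inner B y (δ z) : B))).comp
      (tendsto_const_nhds.prodMk_nhds hi)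
  have hT : Tendsto (fun t : ℝ => t⁻¹ • (u t w - w)) (𝓝[≠] 0) (𝓝 L) := by
    have := (t1.add t2).add t3
    simpa only [← key, hL, add_assoc] using this
  have hmem : w ∈ D := (hD w).mpr ⟨L, hT⟩
  exact ⟨hmem, tendsto_nhds_unique (hδ w hmem) hT⟩
end

section
/- Characterization of inner ternary derivations: for α ∈ B^a(E) (adjointable operators on a Hilbert B-module E) and β ∈ B, the map δ(x) = αx − xβ is a ternary derivation of E if and only if (β + β*)⟨y,z⟩ = ⟨y, (α + α*)z⟩ for all y, z ∈ E. In particular, if α* = −α and β* = −β, then δ is a ternary derivation. -/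
open scoped RightActions

namespace CStarModuleOld

section
variable {B E : Type*} [NonUnitalCStarAlgebra B] [PartialOrder B]
    [NormedAddCommGroup E] [NormedSpace ℂ E] [SMul Bᵐᵒᵖ E] [CStarModuleOld B E]

@[simp]
theorem inner_zero_right' (x : E) : (inner B x (0 : E) : B) = 0 := by
  have h := (CStarModuleOld.inner_add_right (A := B) (x := x) (y := (0 : E)) (z := 0))
  rw [add_zero] at h
  exact (add_eq_left.mp h.symm)

theorem inner_neg_right (x y : E) : (inner B x (-y) : B) = -inner B x y := by
  have h := (CStarModuleOld.inner_add_right (A := B) (x := x) (y := y) (z := -y))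
  rw [add_neg_cancel, inner_zero_right'] at h
  exact (neg_eq_of_add_eq_zero_right h.symm).symm

theorem inner_sub_right (x y z : E) : (inner B x (y - z) : B) = inner B x y - inner B x z := by
  rw [sub_eq_add_neg, CStarModuleOld.inner_add_right, inner_neg_right, ← sub_eq_add_neg]

theorem inner_add_left (x y z : E) : (inner B (x + y) z : B) = inner B x z + inner B y z := by
  rw [← CStarModuleOld.star_inner z, CStarModuleOld.inner_add_right, star_add,
    CStarModuleOld.star_inner, CStarModuleOld.star_inner]

theorem inner_sub_left (x y z : E) : (inner B (x - y) z : B) = inner B x z - inner B y z := by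
  rw [← CStarModuleOld.star_inner z, inner_sub_right, star_sub,
    CStarModuleOld.star_inner, CStarModuleOld.star_inner]

theorem inner_op_smul_left (a : B) (x y : E) : (inner B (x <• a) y : B) = star a * inner B x y := by
  rw [← CStarModuleOld.star_inner y, CStarModuleOld.inner_op_smul_right, star_mul,
    CStarModuleOld.star_inner]

end

end CStarModuleOld

/-- Characterization of inner generalized derivations `δ(x) = αx − xβ` (with `α` adjointable
with adjoint `αadj = α*`) that are ternary derivations; in particular `δ` is a ternary
derivation if `α` and `β` are skew-adjoint. -/
theorem stmt17 {B E : Type*}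
    [NonUnitalCStarAlgebra B] [PartialOrder B] [StarOrderedRing B]
    [NormedAddCommGroup E] [NormedSpace ℂ E] [SMul Bᵐᵒᵖ E] [CStarModuleOld B E]
    [CompleteSpace E]
    (α αadj : E →ₗ[ℂ] E)
    (hadj : ∀ x y : E, (inner B (α x) y : B) = inner B x (αadj y))
    (β : B) :
    ((∀ x y z : E,
      (fun w : E => α w - w <• β) (x <• (inner B y z : B)) =
        (fun w : E => α w - w <• β) x <• (inner B y z : B)
          + x <• (inner B ((fun w : E => α w - w <• β) y) z : B)
          + x <• (inner B y ((fun w : E => α w - w <• β) z) : B)) ↔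
      (∀ y z : E, (β + star β) * (inner B y z : B) = inner B y (α z + αadj z))) ∧
    ((∀ x : E, αadj x = -α x) → star β = -β →
      ∀ x y z : E,
        (fun w : E => α w - w <• β) (x <• (inner B y z : B)) =
          (fun w : E => α w - w <• β) x <• (inner B y z : B)
            + x <• (inner B ((fun w : E => α w - w <• β) y) z : B)
            + x <• (inner B y ((fun w : E => α w - w <• β) z) : B)) := by
  have ext : ∀ u v : E, (∀ w : E, (inner B w u : B) = inner B w v) → u = v := by
    intro u v h
    have h0 : (inner B (u - v) (u - v) : B) = 0 := by
      rw [CStarModuleOld.inner_sub_right, h (u - v), sub_self]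
    exact sub_eq_zero.mp (CStarModuleOld.inner_self.mp h0)
  have hmod : ∀ (x : E) (b : B), α (x <• b) = α x <• b := by
    intro x b
    refine ext _ _ fun w => ?_
    calc (inner B w (α (x <• b)) : B)
        = star (inner B (α (x <• b)) w : B) := by rw [CStarModuleOld.star_inner]
      _ = star (inner B (x <• b) (αadj w) : B) := by rw [hadj]
      _ = star (star b * (inner B x (αadj w) : B)) := by
          rw [CStarModuleOld.inner_op_smul_left]
      _ = star (inner B x (αadj w) : B) * b := by rw [star_mul, star_star]
      _ = (inner B (αadj w) x : B) * b := by rw [CStarModuleOld.star_inner]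
      _ = (inner B w (α x) : B) * b := by
          rw [← CStarModuleOld.star_inner, ← hadj, CStarModuleOld.star_inner]
      _ = inner B w (α x <• b) := (CStarModuleOld.inner_op_smul_right).symm
  have key : ∀ (w x y z : E),
      (inner B w (α (x <• (inner B y z : B)) - (x <• (inner B y z : B)) <• β) : B)
        - inner B w ((α x - x <• β) <• (inner B y z : B)
            + x <• (inner B (α y - y <• β) z : B)
            + x <• (inner B y (α z - z <• β) : B))
      = (inner B w x : B) *
          ((β + star β) * (inner B y z : B) - inner B y (α z + αadj z)) := by
    intro w x y z
    simp only [hmod, CStarModuleOld.inner_sub_right, CStarModuleOld.inner_sub_left,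
      CStarModuleOld.inner_add_right, CStarModuleOld.inner_op_smul_right,
      CStarModuleOld.inner_op_smul_left, hadj]
    noncomm_ring
  have main : (∀ x y z : E,
      (fun w : E => α w - w <• β) (x <• (inner B y z : B)) =
        (fun w : E => α w - w <• β) x <• (inner B y z : B)
          + x <• (inner B ((fun w : E => α w - w <• β) y) z : B)
          + x <• (inner B y ((fun w : E => α w - w <• β) z) : B)) ↔
      (∀ y z : E, (β + star β) * (inner B y z : B) = inner B y (α z + αadj z)) := by
    constructor
    · intro h y z
      set c : B := (β + star β) * (inner B y z : B) - inner B y (α z + αadj z) with hc_def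
      have hc : ∀ w x : E, (inner B w x : B) * c = 0 := by
        intro w x
        have hk := key w x y z
        have h' := h x y z
        simp only [] at h'
        rw [h', sub_self] at hk
        exact hk.symm
      have hstar : star c = (inner B z (y <• (β + star β)) : B) - inner B (α z + αadj z) y := by
        rw [hc_def, star_sub, star_mul, CStarModuleOld.star_inner,
          CStarModuleOld.star_inner, star_add, star_star, add_comm (star β) β,
          ← CStarModuleOld.inner_op_smul_right]
      have h0 : star c * c = 0 := by
        rw [hstar, sub_mul, hc z (y <• (β + star β)), hc (α z + αadj z) y, sub_zero]
      have : c = 0 := (CStarRing.star_mul_self_eq_zero_iff c).mp h0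
      exact sub_eq_zero.mp this
    · intro h x y z
      simp only []
      refine ext _ _ fun w => ?_
      have hk := key w x y z
      rw [h y z, sub_self, mul_zero] at hk
      exact sub_eq_zero.mp hk
  refine ⟨main, fun h1 h2 => main.mpr fun y z => ?_⟩
  rw [h2, h1 z]
  simp
end

section
/- Lance-type theorem with a homomorphism: let E be a Hilbert B-module, F a Hilbert C-module, and u : E → F a surjective isometric Banach space isomorphism onto F. If u is φ-linear (u(xb) = u(x)φ(b)) for a surjective *-homomorphism φ : B → C, and E, F are full, then u is a φ-unitary, i.e. ⟨ux, uy⟩ = φ(⟨x,y⟩) for all x, y ∈ E. -/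
open scoped RightActions

/-- The Hilbert C⋆-module class as Mathlib defined it in December 2024 (right action of `Aᵐᵒᵖ`,
inner product `A`-linear on the right in the second argument). -/
class OldCStarModule (A : outParam <| Type*) (E : Type*) [NonUnitalSemiring A] [StarRing A]
    [Module ℂ A] [AddCommGroup E] [Module ℂ E] [PartialOrder A] [SMul Aᵐᵒᵖ E] [Norm A] [Norm E]
    extends Inner A E where
  inner_add_right {x} {y} {z} : inner x (y + z) = inner x y + inner x z
  inner_self_nonneg {x} : 0 ≤ inner x x
  inner_self {x} : inner x x = 0 ↔ x = 0
  inner_op_smul_right {a : A} {x y : E} : inner x (y <• a) = inner x y * a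
  inner_smul_right_complex {z : ℂ} {x} {y} : inner x (z • y) = z • inner x y
  star_inner x y : star (inner x y) = inner y x
  norm_eq_sqrt_norm_inner_self x : ‖x‖ = Real.sqrt ‖inner x x‖

namespace OldCStarModule

variable {A E : Type*} [NonUnitalCStarAlgebra A] [PartialOrder A]
  [NormedAddCommGroup E] [NormedSpace ℂ E] [SMul Aᵐᵒᵖ E] [OldCStarModule A E]

attribute [simp] OldCStarModule.inner_add_right OldCStarModule.inner_op_smul_right
attribute [simp] OldCStarModule.inner_smul_right_complex

@[simp]
lemma inner_add_left {x y z : E} : inner A (x + y) z = inner A x z + inner A y z := by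
  rw [← OldCStarModule.star_inner z (x + y), OldCStarModule.inner_add_right, star_add,
    OldCStarModule.star_inner, OldCStarModule.star_inner]

@[simp]
lemma inner_op_smul_left {a : A} {x y : E} : inner A (x <• a) y = star a * inner A x y := by
  rw [← OldCStarModule.star_inner y, OldCStarModule.inner_op_smul_right, star_mul,
    OldCStarModule.star_inner]

@[simp]
lemma inner_zero_right {x : E} : inner A x 0 = 0 := by
  have h := OldCStarModule.inner_add_right (A := A) (x := x) (y := (0 : E)) (z := 0)
  rw [add_zero] at h
  simpa using h

@[simp]
lemma inner_smul_left_complex {z : ℂ} {x y : E} : inner A (z • x) y = star z • inner A x y := by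
  rw [← OldCStarModule.star_inner y, OldCStarModule.inner_smul_right_complex, star_smul,
    OldCStarModule.star_inner]

end OldCStarModule

section OrderLemma

open CStarAlgebra Unitization Filter Topology

variable {A : Type*} [NonUnitalCStarAlgebra A] [PartialOrder A] [StarOrderedRing A]

/-- If `‖s * d‖ ≤ ‖r * d‖` for all `d` in the algebra, the same holds for all `d` in the
unitization. -/
lemma aux_norm_mul_le_unitization (s r : A)
    (h : ∀ d : A, ‖s * d‖ ≤ ‖r * d‖) (d' : Unitization ℂ A) :
    ‖(s : Unitization ℂ A) * d'‖ ≤ ‖(r : Unitization ℂ A) * d'‖ := by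
  set l := CStarAlgebra.approximateUnit A with hl
  have hiau := CStarAlgebra.increasingApproximateUnit A
  haveI : l.NeBot := hiau.neBot
  set m₀ := ((s : Unitization ℂ A) * d').snd with hm₀
  have hm : ((s : Unitization ℂ A) * d') = (m₀ : Unitization ℂ A) := by
    refine Unitization.ext ?_ rfl
    simp [Unitization.fst_mul]
  have key : ∀ᶠ e in l, ‖m₀ * e‖ ≤ ‖(r : Unitization ℂ A) * d'‖ := by
    filter_upwards [hiau.eventually_norm] with e he
    set de := (d' * (e : Unitization ℂ A)).snd with hde₀
    have hde : d' * (e : Unitization ℂ A) = (de : Unitization ℂ A) := by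
      refine Unitization.ext ?_ rfl
      simp [Unitization.fst_mul]
    have h1 : m₀ * e = s * de := by
      have : ((m₀ * e : A) : Unitization ℂ A) = ((s * de : A) : Unitization ℂ A) := by
        rw [Unitization.inr_mul, Unitization.inr_mul, ← hm, ← hde, mul_assoc]
      exact Unitization.inr_injective this
    calc ‖m₀ * e‖ = ‖s * de‖ := by rw [h1]
      _ ≤ ‖r * de‖ := h de
      _ = ‖(r : Unitization ℂ A) * d' * (e : Unitization ℂ A)‖ := by
          rw [mul_assoc, hde, ← Unitization.inr_mul, Unitization.norm_inr]
      _ ≤ ‖(r : Unitization ℂ A) * d'‖ * ‖(e : Unitization ℂ A)‖ := norm_mul_le _ _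
      _ ≤ ‖(r : Unitization ℂ A) * d'‖ := by
          refine mul_le_of_le_one_right (norm_nonneg _) ?_
          rwa [Unitization.norm_inr]
  have tend : Tendsto (fun e : A => ‖m₀ * e‖) l (𝓝 ‖m₀‖) :=
    (continuous_norm.tendsto _).comp (hiau.tendsto_mul_left m₀)
  have := le_of_tendsto tend key
  rwa [hm, Unitization.norm_inr]

/-- Key order-theoretic lemma: if all conjugates of `c` are dominated in norm by the
corresponding conjugates of `a`, then `c ≤ a`. -/
lemma aux_le_of_forall_conj_norm_le (a c : A) (ha : 0 ≤ a) (hc : 0 ≤ c)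
    (h : ∀ d : A, ‖star d * c * d‖ ≤ ‖star d * a * d‖) : c ≤ a := by
  have sqrt_conj : ∀ (w : A) (hw : 0 ≤ w) (d : A),
      star (CFC.sqrt w * d) * (CFC.sqrt w * d) = star d * w * d := by
    intro w hw d
    rw [star_mul, (IsSelfAdjoint.of_nonneg (CFC.sqrt_nonneg (a := w))).star_eq,
      mul_assoc, ← mul_assoc (CFC.sqrt w), CFC.sqrt_mul_sqrt_self w hw, ← mul_assoc]
  have hsc : ∀ d : A, ‖CFC.sqrt c * d‖ ≤ ‖CFC.sqrt a * d‖ := by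
    intro d
    have e1 : ‖CFC.sqrt c * d‖ ^ 2 = ‖star d * c * d‖ := by
      rw [sq, ← CStarRing.norm_star_mul_self, sqrt_conj c hc d]
    have e2 : ‖CFC.sqrt a * d‖ ^ 2 = ‖star d * a * d‖ := by
      rw [sq, ← CStarRing.norm_star_mul_self, sqrt_conj a ha d]
    nlinarith [h d, norm_nonneg (CFC.sqrt c * d), norm_nonneg (CFC.sqrt a * d)]
  have hsc' : ∀ d' : Unitization ℂ A,
      ‖((CFC.sqrt c : A) : Unitization ℂ A) * d'‖ ≤ ‖((CFC.sqrt a : A) : Unitization ℂ A) * d'‖ :=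
    aux_norm_mul_le_unitization _ _ hsc
  have sqrt_inr : ∀ (w : A) (hw : 0 ≤ w),
      ((CFC.sqrt w : A) : Unitization ℂ A) = CFC.sqrt ((w : Unitization ℂ A)) := by
    intro w hw
    have h1 : CFC.sqrt w = cfcₙ NNReal.sqrt w := rfl
    rw [h1, Unitization.nnreal_cfcₙ_eq_cfc_inr w NNReal.sqrt (by simp), ← CFC.sqrt_eq_cfc]
  have main : ∀ ε : ℝ, 0 < ε →
      (c : Unitization ℂ A) ≤ (a : Unitization ℂ A) + algebraMap ℝ (Unitization ℂ A) ε := by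
    intro ε hε
    set b : Unitization ℂ A := (a : Unitization ℂ A) + algebraMap ℝ (Unitization ℂ A) ε with hbdef
    have hmap : (0 : Unitization ℂ A) ≤ algebraMap ℝ (Unitization ℂ A) ε := by
      have := (norm_le_iff_le_algebraMap (a := (0 : Unitization ℂ A)) (r := ε) hε.le
        (ha := le_rfl)).mp (by simpa using hε.le)
      exact this
    have ha' : 0 ≤ (a : Unitization ℂ A) := Unitization.inr_nonneg_iff.mpr ha
    have hc' : 0 ≤ (c : Unitization ℂ A) := Unitization.inr_nonneg_iff.mpr hc
    have hb0 : 0 ≤ b := add_nonneg ha' hmap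
    have hbu : IsUnit b := by
      refine CStarAlgebra.isUnit_of_le _ ?_ (IsUnit.isStrictlyPositive ?_ hmap)
      · exact le_add_of_nonneg_left ha'
      · exact (hε.ne'.isUnit).map (algebraMap ℝ (Unitization ℂ A))
    have hab : (a : Unitization ℂ A) ≤ b := le_add_of_nonneg_right hmap
    rw [le_iff_norm_sqrt_mul_rpow _ _ hc' (hbu.isStrictlyPositive hb0)]
    calc ‖CFC.sqrt (c : Unitization ℂ A) * b ^ (-(1 / 2) : ℝ)‖
        ≤ ‖CFC.sqrt (a : Unitization ℂ A) * b ^ (-(1 / 2) : ℝ)‖ := by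
          rw [← sqrt_inr c hc, ← sqrt_inr a ha]; exact hsc' _
      _ ≤ 1 := (le_iff_norm_sqrt_mul_rpow _ _ ha' (hbu.isStrictlyPositive hb0)).mp hab
  have hlim : (0 : Unitization ℂ A) ≤ (a : Unitization ℂ A) - (c : Unitization ℂ A) := by
    have htend : Tendsto
        (fun ε : ℝ => (a : Unitization ℂ A) + algebraMap ℝ (Unitization ℂ A) ε
          - (c : Unitization ℂ A)) (𝓝[>] (0 : ℝ))
        (𝓝 ((a : Unitization ℂ A) - (c : Unitization ℂ A))) := by
      have hcont : Continuous (fun ε : ℝ => (a : Unitization ℂ A)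
          + algebraMap ℝ (Unitization ℂ A) ε - (c : Unitization ℂ A)) := by
        have : Continuous (algebraMap ℝ (Unitization ℂ A)) := continuous_algebraMap _ _
        fun_prop
      have h' := (hcont.tendsto 0).mono_left (nhdsWithin_le_nhds (s := Set.Ioi (0 : ℝ)))
      have h0 : (a : Unitization ℂ A) + algebraMap ℝ (Unitization ℂ A) 0 - (c : Unitization ℂ A)
          = (a : Unitization ℂ A) - (c : Unitization ℂ A) := by
        rw [map_zero, add_zero]
      rw [h0] at h'
      exact h'
    have hmem : ∀ᶠ ε in 𝓝[>] (0 : ℝ), (a : Unitization ℂ A)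
        + algebraMap ℝ (Unitization ℂ A) ε - (c : Unitization ℂ A)
        ∈ {x : Unitization ℂ A | 0 ≤ x} := by
      filter_upwards [self_mem_nhdsWithin] with ε (hε : 0 < ε)
      exact sub_nonneg.mpr (main ε hε)
    have hmem2 : ((a : Unitization ℂ A) - (c : Unitization ℂ A))
        ∈ {x : Unitization ℂ A | 0 ≤ x} :=
      IsClosed.mem_of_tendsto CStarAlgebra.isClosed_nonneg htend hmem
    exact hmem2
  have : (c : Unitization ℂ A) ≤ (a : Unitization ℂ A) := sub_nonneg.mp hlim
  exact (Unitization.inr_le_iff c a (.of_nonneg hc) (.of_nonneg ha)).mp this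

end OrderLemma

/-- Lance-type theorem: a surjective, `φ`-linear, isometric Banach space isomorphism
between full Hilbert C*-modules, for a surjective `*`-homomorphism `φ`, is a
`φ`-unitary. -/
theorem stmt18 {B C E F : Type*}
    [NonUnitalCStarAlgebra B] [PartialOrder B] [StarOrderedRing B]
    [NonUnitalCStarAlgebra C] [PartialOrder C] [StarOrderedRing C]
    [NormedAddCommGroup E] [NormedSpace ℂ E] [SMul Bᵐᵒᵖ E] [OldCStarModule B E]
    [CompleteSpace E]
    [NormedAddCommGroup F] [NormedSpace ℂ F] [SMul Cᵐᵒᵖ F] [OldCStarModule C F]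
    [CompleteSpace F]
    (hfullE : (Submodule.span ℂ {b : B | ∃ x y : E, (inner B x y : B) = b}).topologicalClosure = ⊤)
    (hfullF : (Submodule.span ℂ {c : C | ∃ x y : F, (inner C x y : C) = c}).topologicalClosure = ⊤)
    (φ : B →⋆ₙₐ[ℂ] C) (hφsurj : Function.Surjective φ)
    (u : E →ₗ[ℂ] F) (hbij : Function.Bijective u)
    (hisom : ∀ x : E, ‖u x‖ = ‖x‖)
    (hlin : ∀ (x : E) (b : B), u (x <• b) = (u x) <• (φ b)) :
    ∀ x y : E, (inner C (u x) (u y) : C) = φ (inner B x y) := by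
  have normsqE : ∀ z : E, ‖z‖ ^ 2 = ‖(inner B z z : B)‖ := fun z => by
    rw [OldCStarModule.norm_eq_sqrt_norm_inner_self, Real.sq_sqrt (norm_nonneg _)]
  have normsqF : ∀ z : F, ‖z‖ ^ 2 = ‖(inner C z z : C)‖ := fun z => by
    rw [OldCStarModule.norm_eq_sqrt_norm_inner_self, Real.sq_sqrt (norm_nonneg _)]
  -- `φ` is injective, hence isometric
  have hker : ∀ b : B, φ b = 0 → b = 0 := by
    intro b hb
    have hzero : ∀ x : E, x <• b = 0 := by
      intro x
      have h0 : (u x) <• (0 : C) = (0 : F) := by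
        have h1 : ‖(u x) <• (0 : C)‖ ^ 2 = 0 := by
          rw [normsqF, OldCStarModule.inner_op_smul_left, OldCStarModule.inner_op_smul_right]
          simp
        have h2 : ‖(u x) <• (0 : C)‖ = 0 := by
          nlinarith [norm_nonneg ((u x) <• (0 : C))]
        exact norm_eq_zero.mp h2
      have : ‖x <• b‖ = 0 := by
        rw [← hisom, hlin, hb, h0, norm_zero]
      exact norm_eq_zero.mp this
    have hspan : Submodule.span ℂ {b' : B | ∃ x y : E, (inner B x y : B) = b'} ≤
        LinearMap.ker ((ContinuousLinearMap.mul ℂ B).flip b : B →ₗ[ℂ] B) := by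
      rw [Submodule.span_le]
      rintro z ⟨x, y, rfl⟩
      have : (inner B x y : B) * b = 0 := by
        rw [← OldCStarModule.inner_op_smul_right, hzero, OldCStarModule.inner_zero_right]
      simpa using this
    have hclosed : IsClosed ((LinearMap.ker ((ContinuousLinearMap.mul ℂ B).flip b : B →ₗ[ℂ] B) :
        Submodule ℂ B) : Set B) := ContinuousLinearMap.isClosed_ker _
    have hcl : (Submodule.span ℂ {b' : B | ∃ x y : E, (inner B x y : B) = b'}).topologicalClosure
        ≤ LinearMap.ker ((ContinuousLinearMap.mul ℂ B).flip b : B →ₗ[ℂ] B) :=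
      Submodule.topologicalClosure_minimal _ hspan hclosed
    rw [hfullE, top_le_iff] at hcl
    have hall : (star b) * b = 0 := by
      have : star b ∈ LinearMap.ker ((ContinuousLinearMap.mul ℂ B).flip b : B →ₗ[ℂ] B) := by
        rw [hcl]; trivial
      simpa using this
    exact (CStarRing.star_mul_self_eq_zero_iff b).mp hall
  have hφinj : Function.Injective φ := by
    intro b₁ b₂ hb
    have h1 : φ (b₁ - b₂) = 0 := by rw [map_sub, hb, sub_self]
    have := hker _ h1
    exact sub_eq_zero.mp this
  have hφisom : ∀ b : B, ‖φ b‖ = ‖b‖ := fun b => NonUnitalStarAlgHom.norm_map φ hφinj b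
  -- the diagonal case
  have diag : ∀ x : E, (inner C (u x) (u x) : C) = φ (inner B x x) := by
    intro x
    have ha : 0 ≤ (inner B x x : B) := OldCStarModule.inner_self_nonneg
    have hc : 0 ≤ (inner C (u x) (u x) : C) := OldCStarModule.inner_self_nonneg
    have hφa : 0 ≤ φ (inner B x x) := by
      have h1 : (inner B x x : B) = star (CFC.sqrt (inner B x x : B)) * CFC.sqrt (inner B x x : B) := by
        rw [(IsSelfAdjoint.of_nonneg (CFC.sqrt_nonneg (a := (inner B x x : B)))).star_eq,
          CFC.sqrt_mul_sqrt_self _ ha]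
      rw [h1, map_mul, map_star]
      exact star_mul_self_nonneg _
    have key : ∀ d : C, ‖star d * (inner C (u x) (u x) : C) * d‖
        = ‖star d * φ (inner B x x) * d‖ := by
      intro d
      obtain ⟨b, rfl⟩ := hφsurj d
      have h1 : ‖u (x <• b)‖ ^ 2 = ‖star (φ b) * (inner C (u x) (u x) : C) * φ b‖ := by
        rw [normsqF, hlin]
        congr 1
        simp [mul_assoc]
      have h2 : ‖x <• b‖ ^ 2 = ‖star b * (inner B x x : B) * b‖ := by
        rw [normsqE]
        congr 1
        simp [mul_assoc]
      have h3 : ‖star (φ b) * φ (inner B x x) * φ b‖ = ‖star b * (inner B x x : B) * b‖ := by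
        rw [← map_star, ← map_mul, ← map_mul, hφisom]
      calc ‖star (φ b) * (inner C (u x) (u x) : C) * φ b‖
          = ‖u (x <• b)‖ ^ 2 := h1.symm
        _ = ‖x <• b‖ ^ 2 := by rw [hisom]
        _ = ‖star b * (inner B x x : B) * b‖ := h2
        _ = ‖star (φ b) * φ (inner B x x) * φ b‖ := h3.symm
    exact le_antisymm
      (aux_le_of_forall_conj_norm_le (φ (inner B x x)) _ hφa hc (fun d => (key d).le))
      (aux_le_of_forall_conj_norm_le _ (φ (inner B x x)) hc hφa (fun d => (key d).ge))
  -- polarization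
  intro x y
  have hF1 : (inner C (u x + u y) (u x + u y) : C)
      = inner C (u x) (u x) + (inner C (u x) (u y) + inner C (u y) (u x)) + inner C (u y) (u y) := by
    simp only [OldCStarModule.inner_add_left, OldCStarModule.inner_add_right]; abel
  have hB1 : φ (inner B (x + y) (x + y) : B)
      = φ (inner B x x) + (φ (inner B x y) + φ (inner B y x)) + φ (inner B y y) := by
    have : (inner B (x + y) (x + y) : B)
        = inner B x x + (inner B x y + inner B y x) + inner B y y := by
      simp only [OldCStarModule.inner_add_left, OldCStarModule.inner_add_right]; abel
    rw [this, map_add, map_add, map_add]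
  have E1 : (inner C (u x) (u y) : C) + inner C (u y) (u x)
      = φ (inner B x y) + φ (inner B y x) := by
    have h := diag (x + y)
    rw [map_add, hF1, hB1, diag x, diag y] at h
    exact add_left_cancel (add_right_cancel h)
  have hF2 : (inner C (u x + Complex.I • u y) (u x + Complex.I • u y) : C)
      = inner C (u x) (u x)
        + (Complex.I • inner C (u x) (u y) - Complex.I • inner C (u y) (u x))
        + inner C (u y) (u y) := by
    simp only [OldCStarModule.inner_add_left, OldCStarModule.inner_add_right, OldCStarModule.inner_smul_left_complex,
      OldCStarModule.inner_smul_right_complex, Complex.star_def, Complex.conj_I, smul_add,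
      smul_sub, smul_neg, smul_smul, neg_smul, neg_one_smul, neg_mul, mul_neg,
      Complex.I_mul_I, neg_neg, one_smul, mul_one, one_mul]
    abel
  have hB2 : φ (inner B (x + Complex.I • y) (x + Complex.I • y) : B)
      = φ (inner B x x)
        + (Complex.I • φ (inner B x y) - Complex.I • φ (inner B y x))
        + φ (inner B y y) := by
    have : (inner B (x + Complex.I • y) (x + Complex.I • y) : B)
        = inner B x x + (Complex.I • inner B x y - Complex.I • inner B y x) + inner B y y := by
      simp only [OldCStarModule.inner_add_left, OldCStarModule.inner_add_right, OldCStarModule.inner_smul_left_complex,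
        OldCStarModule.inner_smul_right_complex, Complex.star_def, Complex.conj_I, smul_add,
        smul_sub, smul_neg, smul_smul, neg_smul, neg_one_smul, neg_mul, mul_neg,
        Complex.I_mul_I, neg_neg, one_smul, mul_one, one_mul]
      abel
    rw [this, map_add, map_add, map_sub, map_smul, map_smul]
  have E2 : Complex.I • (inner C (u x) (u y) : C) - Complex.I • inner C (u y) (u x)
      = Complex.I • φ (inner B x y) - Complex.I • φ (inner B y x) := by
    have h := diag (x + Complex.I • y)
    rw [map_add, map_smul, hF2, hB2, diag x, diag y] at h
    exact add_left_cancel (add_right_cancel h)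
  have E2' : (inner C (u x) (u y) : C) - inner C (u y) (u x)
      = φ (inner B x y) - φ (inner B y x) := by
    have h := congrArg (fun t => (-Complex.I) • t) E2
    simpa [smul_sub, smul_smul, neg_mul, Complex.I_mul_I, neg_neg, one_smul] using h
  have E3 : (2 : ℂ) • (inner C (u x) (u y) : C) = (2 : ℂ) • φ (inner B x y) := by
    have hh : (inner C (u x) (u y) : C) + inner C (u x) (u y)
        = φ (inner B x y) + φ (inner B x y) := by
      calc (inner C (u x) (u y) : C) + inner C (u x) (u y)
          = ((inner C (u x) (u y) : C) + inner C (u y) (u x))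
            + ((inner C (u x) (u y) : C) - inner C (u y) (u x)) := by abel
        _ = (φ (inner B x y) + φ (inner B y x)) + (φ (inner B x y) - φ (inner B y x)) := by
            rw [E1, E2']
        _ = φ (inner B x y) + φ (inner B x y) := by abel
    simpa [two_smul] using hh
  exact smul_right_injective C two_ne_zero E3
end
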